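/- arXiv:1708.08723 — 8 statements merged into one kernel-verified Lean document; each statement's English description precedes it below -/
import Mathlib

section
/- If the complete graph K_n admits an outer k-planar drawing (a convex drawing in which every edge is crossed by at most k other edges), then n ≤ ⌊√(4k+1)⌋ + 2. -/
open Finset

open scoped Classical

/-- Two chords `{a,b}` and `{c,d}` on points in convex position (labeled by `Fin n`
in cyclic order) cross iff their endpoints interleave. -/
def Interleave {n : ℕ} (a b c d : Fin n) : Prop :=
  (min a b < min c d ∧ min c d < max a b ∧ max a b < max c d) ∨
  (min c d < min a b ∧ min a b < max c d ∧ max c d < max a b)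

/-- Crossing of chords, as unordered pairs. -/
def Sym2Cross {n : ℕ} (e f : Sym2 (Fin n)) : Prop :=
  ∃ a b c d : Fin n, e = s(a, b) ∧ f = s(c, d) ∧ Interleave a b c d

/-- A graph is outer `k`-planar if its vertices can be placed in convex (cyclic)
position so that every edge is crossed by at most `k` other edges. -/
def IsOuterKPlanar {V : Type*} [Fintype V] [DecidableEq V] (k : ℕ) (G : SimpleGraph V) : Prop :=
  ∃ σ : V ≃ Fin (Fintype.card V),
    ∀ e ∈ G.edgeFinset,
      (G.edgeFinset.filter (fun f => f ≠ e ∧ Sym2Cross (e.map σ) (f.map σ))).card ≤ k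

/-- A graph is outer `k`-quasi-planar if its vertices can be placed in convex
position so that no `k` edges pairwise cross. -/
def IsOuterKQuasiPlanar {V : Type*} [Fintype V] [DecidableEq V] (k : ℕ) (G : SimpleGraph V) : Prop :=
  ∃ σ : V ≃ Fin (Fintype.card V),
    ∀ S : Finset (Sym2 V), ↑S ⊆ G.edgeSet →
      (∀ e ∈ S, ∀ f ∈ S, e ≠ f → Sym2Cross (e.map σ) (f.map σ)) → S.card < k

/-- If `K_n` admits an outer `k`-planar drawing then `n ≤ ⌊√(4k+1)⌋ + 2`. -/
theorem stmt1 (n k : ℕ) (h : IsOuterKPlanar k (⊤ : SimpleGraph (Fin n))) :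
    n ≤ Nat.sqrt (4 * k + 1) + 2 := by
  obtain ⟨σ, hσ⟩ := h
  by_cases hn : n ≤ 3
  · have h1 : 1 ≤ Nat.sqrt (4 * k + 1) := by
      rw [Nat.le_sqrt]; omega
    omega
  push_neg at hn
  have hN : Fintype.card (Fin n) = n := Fintype.card_fin n
  set m := n - 2 with hm
  set a := m / 2 with ha
  have hbN : a + 1 < Fintype.card (Fin n) := by omega
  have h0N : 0 < Fintype.card (Fin n) := by omega
  set p0 : Fin (Fintype.card (Fin n)) := ⟨0, h0N⟩ with hp0
  set pb : Fin (Fintype.card (Fin n)) := ⟨a + 1, hbN⟩ with hpb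
  have hppb : p0 < pb := by simp [hp0, hpb, Fin.lt_def]
  have hne : σ.symm p0 ≠ σ.symm pb := fun hc =>
    absurd (σ.symm.injective hc) (ne_of_lt hppb)
  set e : Sym2 (Fin n) := s(σ.symm p0, σ.symm pb) with he
  have hemap : e.map σ = s(p0, pb) := by
    simp [he, Sym2.map_pair_eq]
  have heF : e ∈ (⊤ : SimpleGraph (Fin n)).edgeFinset := by
    simp [he, hne]
  have key := hσ e (by convert heF using 2 <;> exact Subsingleton.elim _ _)
  set S := (Finset.Ioo p0 pb) ×ˢ (Finset.Ioi pb) with hS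
  have hcard : S.card = a * (m - a) := by
    rw [hS, Finset.card_product, Fin.card_Ioo, Fin.card_Ioi]
    show (a + 1 - 0 - 1) * (Fintype.card (Fin n) - 1 - (a + 1)) = a * (m - a)
    congr 1 <;> omega
  have hk : a * (m - a) ≤ k := by
    refine le_trans ?_ key
    rw [← hcard]
    apply Finset.card_le_card_of_injOn (fun cd => s(σ.symm cd.1, σ.symm cd.2))
    · rintro ⟨c, d⟩ hcd
      simp only [Finset.mem_coe, hS, Finset.mem_product, Finset.mem_Ioo, Finset.mem_Ioi] at hcd
      obtain ⟨⟨hc0, hcb⟩, hd⟩ := hcd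
      have hcd' : c < d := lt_trans hcb hd
      have hmap : (s(σ.symm c, σ.symm d)).map σ = s(c, d) := by
        simp [Sym2.map_pair_eq]
      simp only [Finset.mem_coe, Finset.mem_filter]
      refine ⟨?_, ?_, ?_⟩
      · have : σ.symm c ≠ σ.symm d := fun hc =>
          absurd (σ.symm.injective hc) (ne_of_lt hcd')
        have hmem : s(σ.symm c, σ.symm d) ∈ (⊤ : SimpleGraph (Fin n)).edgeFinset := by
          simp [this]
        convert hmem using 2 <;> exact Subsingleton.elim _ _
      · intro hcontra
        have h2 : s(c, d) = s(p0, pb) := by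
          rw [← hmap, ← hemap, hcontra]
        rw [Sym2.eq_iff] at h2
        rcases h2 with ⟨h1, _⟩ | ⟨h1, _⟩
        · exact absurd h1 (ne_of_gt hc0)
        · exact absurd h1 (ne_of_lt hcb)
      · rw [hemap, hmap]
        refine ⟨p0, pb, c, d, rfl, rfl, Or.inl ?_⟩
        rw [min_eq_left hppb.le, max_eq_right hppb.le,
          min_eq_left hcd'.le, max_eq_right hcd'.le]
        exact ⟨hc0, hcb, hd⟩
    · rintro ⟨c, d⟩ hcd ⟨c', d'⟩ hcd' heq
      simp only [hS, Finset.coe_product, Set.mem_prod, Finset.mem_coe,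
        Finset.mem_Ioo, Finset.mem_Ioi] at hcd hcd'
      have h2 : s(c, d) = s(c', d') := by
        have := congrArg (Sym2.map σ) heq
        simpa [Sym2.map_pair_eq] using this
      rw [Sym2.eq_iff] at h2
      rcases h2 with ⟨h1, h2⟩ | ⟨h1, h2⟩
      · simp [h1, h2]
      · exfalso
        have : c < d' := lt_trans hcd.1.2 hcd'.2
        rw [h1] at this
        exact lt_irrefl _ this
  have hmsq : m ≤ Nat.sqrt (4 * k + 1) := by
    rw [Nat.le_sqrt]
    have h2 : m = 2 * a ∧ m - a = a ∨ m = 2 * a + 1 ∧ m - a = a + 1 := by omega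
    rcases h2 with ⟨h2, h3⟩ | ⟨h2, h3⟩ <;> rw [h3] at hk <;> nlinarith [hk]
  omega
end

section
/- For every k ≥ 0, the complete graph on ⌊√(4k+1)⌋ + 2 vertices admits an outer k-planar drawing; i.e., in the convex drawing of K_n with n = ⌊√(4k+1)⌋ + 2, every edge is crossed by at most k other edges. -/
open Finset

open scoped Classical

lemma sym2cross_pair_iff {n : ℕ} (a b c d : Fin n) :
    Sym2Cross s(a, b) s(c, d) ↔ Interleave a b c d := by
  constructor
  · rintro ⟨a', b', c', d', h1, h2, h3⟩
    rw [Sym2.eq_iff] at h1 h2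
    unfold Interleave at h3 ⊢
    rcases h1 with ⟨rfl, rfl⟩ | ⟨rfl, rfl⟩ <;> rcases h2 with ⟨rfl, rfl⟩ | ⟨rfl, rfl⟩ <;>
      simpa [min_comm, max_comm] using h3
  · exact fun h => ⟨a, b, c, d, rfl, rfl, h⟩

lemma interleave_cast {m n : ℕ} (h : m = n) (a b c d : Fin m) :
    Interleave (Fin.cast h a) (Fin.cast h b) (Fin.cast h c) (Fin.cast h d) ↔
      Interleave a b c d := by
  subst h
  rfl

lemma s_min_max {n : ℕ} (c d : Fin n) : s(min c d, max c d) = s(c, d) := by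
  rcases le_total c d with h | h
  · rw [min_eq_left h, max_eq_right h]
  · rw [min_eq_right h, max_eq_left h]
    exact Sym2.eq_swap

lemma arith_bound (k l j : ℕ) (h : l + j ≤ Nat.sqrt (4 * k + 1)) : l * j ≤ k := by
  have hs : Nat.sqrt (4 * k + 1) ^ 2 ≤ 4 * k + 1 := Nat.sqrt_le' (4 * k + 1)
  have h1 : (l : ℤ) + j ≤ (Nat.sqrt (4 * k + 1) : ℤ) := by exact_mod_cast h
  have h2 : ((Nat.sqrt (4 * k + 1) : ℤ)) ^ 2 ≤ 4 * k + 1 := by exact_mod_cast hs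
  have h3 : (0 : ℤ) ≤ l := Int.natCast_nonneg l
  have h4 : (0 : ℤ) ≤ j := Int.natCast_nonneg j
  have : (l : ℤ) * j ≤ k := by nlinarith [sq_nonneg ((l : ℤ) - j)]
  exact_mod_cast this

/-- For every `k`, the complete graph on `⌊√(4k+1)⌋ + 2` vertices is outer `k`-planar. -/
theorem stmt2 (k : ℕ) :
    IsOuterKPlanar k (⊤ : SimpleGraph (Fin (Nat.sqrt (4 * k + 1) + 2))) := by
  classical
  refine ⟨finCongr (Fintype.card_fin (Nat.sqrt (4 * k + 1) + 2)).symm, ?_⟩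
  intro e he
  induction e using Sym2.inductionOn with
  | hf a b =>
    rcases eq_or_ne a b with rfl | hab
    · -- degenerate chord: nothing crosses it
      have hempty : ∀ f : Sym2 (Fin (Nat.sqrt (4 * k + 1) + 2)),
          ¬ (f ≠ s(a, a) ∧
            Sym2Cross
              (Sym2.map (finCongr (Fintype.card_fin (Nat.sqrt (4 * k + 1) + 2)).symm) s(a, a))
              (Sym2.map (finCongr (Fintype.card_fin (Nat.sqrt (4 * k + 1) + 2)).symm) f)) := by
        rintro f ⟨-, hcross⟩
        obtain ⟨a', b', c', d', h1, h2, h3⟩ := hcross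
        rw [Sym2.map_pair_eq, Sym2.eq_iff] at h1
        unfold Interleave at h3
        rcases h1 with ⟨rfl, rfl⟩ | ⟨rfl, rfl⟩ <;>
          simp only [min_self, max_self] at h3 <;>
          rcases h3 with ⟨u, v, -⟩ | ⟨-, u, v⟩ <;>
          exact absurd (u.trans v) (lt_irrefl _)
      refine Nat.le_trans (Nat.le_of_eq ?_) (Nat.zero_le k)
      rw [Finset.card_eq_zero, Finset.filter_eq_empty_iff]
      intro f _
      exact hempty f
    · have hlo : min a b < max a b := min_lt_max.mpr hab
      rw [← s_min_max a b]
      have hbound : ((Finset.Ioo (min a b) (max a b) ×ˢ (Finset.Icc (min a b) (max a b))ᶜ).image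
          (fun p : Fin (Nat.sqrt (4 * k + 1) + 2) × Fin (Nat.sqrt (4 * k + 1) + 2) =>
            s(p.1, p.2))).card ≤ k := by
        refine le_trans Finset.card_image_le ?_
        rw [Finset.card_product, Finset.card_compl, Fin.card_Ioo, Fin.card_Icc, Fintype.card_fin]
        have hb : (max a b).val < Nat.sqrt (4 * k + 1) + 2 := (max a b).isLt
        have hab' : (min a b).val < (max a b).val := hlo
        have hle : ((max a b).val - (min a b).val - 1)
            + (Nat.sqrt (4 * k + 1) + 2 - ((max a b).val + 1 - (min a b).val))
            ≤ Nat.sqrt (4 * k + 1) := by omega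
        exact arith_bound k _ _ hle
      refine le_trans (Finset.card_le_card ?_) hbound
      intro f hf
      induction f using Sym2.inductionOn with
      | hf c d =>
        simp only [Finset.mem_filter] at hf
        obtain ⟨hf1, hf2, hf3⟩ := hf
        rw [Sym2.map_pair_eq, Sym2.map_pair_eq, sym2cross_pair_iff] at hf3
        simp only [finCongr_apply] at hf3
        rw [interleave_cast] at hf3
        unfold Interleave at hf3
        rw [min_eq_left hlo.le, max_eq_right hlo.le] at hf3
        rcases hf3 with ⟨h1, h2, h3⟩ | ⟨h1, h2, h3⟩
        · refine Finset.mem_image.2 ⟨(min c d, max c d), ?_, s_min_max c d⟩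
          simp only [Finset.mem_product, Finset.mem_Ioo, Finset.mem_compl, Finset.mem_Icc,
            not_and, not_le]
          exact ⟨⟨h1, h2⟩, fun _ => h3⟩
        · refine Finset.mem_image.2
            ⟨(max c d, min c d), ?_, by rw [Sym2.eq_swap]; exact s_min_max c d⟩
          simp only [Finset.mem_product, Finset.mem_Ioo, Finset.mem_compl, Finset.mem_Icc,
            not_and, not_le]
          exact ⟨⟨h2, h3⟩, fun hle => absurd hle h1.not_ge⟩
end

section
/- Let G be a graph admitting an outer k-planar drawing with minimum degree δ. If an edge {a,b} of the drawing has exactly l vertices strictly on one side (in the cyclic order), then the number of edges crossing {a,b} is at least δ·l − l·(l+1). -/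
open Finset

open scoped Classical

/-- In an outer `k`-planar drawing of a graph with minimum degree `δ`, an edge
`{a,b}` with exactly `l` vertices strictly on one side is crossed by at least
`δ * l - l * (l + 1)` edges. -/
theorem stmt3 (n k δ : ℕ) (G : SimpleGraph (Fin n)) [DecidableRel G.Adj]
    (hk : ∀ e ∈ G.edgeFinset,
      (G.edgeFinset.filter (fun f => f ≠ e ∧ Sym2Cross e f)).card ≤ k)
    (hδ : ∀ v : Fin n, δ ≤ G.degree v)
    (a b : Fin n) (hab : a < b) (hadj : G.Adj a b) (l : ℕ)
    (hl : l = (Finset.univ.filter (fun c : Fin n => a < c ∧ c < b)).card) :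
    δ * l - l * (l + 1) ≤
      (G.edgeFinset.filter (fun f => Sym2Cross s(a, b) f)).card := by
  classical
  set S : Finset (Fin n) := Finset.univ.filter (fun c : Fin n => a < c ∧ c < b) with hSdef
  set T : Finset (Fin n) := insert a (insert b S) with hTdef
  have hST : S ⊆ T := by
    intro x hx
    simp [hTdef, hx]
  have hTcard : T.card ≤ l + 2 := by
    have h1 := Finset.card_insert_le a (insert b S)
    have h2 := Finset.card_insert_le b S
    rw [hTdef]
    omega
  set C := G.edgeFinset.filter (fun f => Sym2Cross s(a, b) f) with hCdef
  -- membership of crossing edges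
  have hmemS : ∀ v : Fin n, v ∈ S ↔ a < v ∧ v < b := by
    intro v; simp [hSdef]
  have hmemC : ∀ v w : Fin n, v ∈ S → G.Adj v w → w ∉ T → s(v, w) ∈ C := by
    intro v w hv hadj' hwT
    have hva : a < v ∧ v < b := (hmemS v).mp hv
    have hwa : w ≠ a := by rintro rfl; exact hwT (by simp [hTdef])
    have hwb : w ≠ b := by rintro rfl; exact hwT (by simp [hTdef])
    have hwS : w ∉ S := fun h => hwT (hST h)
    have hcase : w < a ∨ b < w := by
      rcases lt_or_ge w a with h | h
      · exact Or.inl h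
      · rcases lt_or_ge w b with h' | h' 
        · exact absurd ((hmemS w).mpr ⟨lt_of_le_of_ne h (Ne.symm hwa), h'⟩) hwS
        · exact Or.inr (lt_of_le_of_ne h' (Ne.symm hwb))
    have hcross : Interleave a b v w := by
      have hminab : min a b = a := min_eq_left hab.le
      have hmaxab : max a b = b := max_eq_right hab.le
      rcases hcase with h | h
      · right
        have h1 : min v w = w := min_eq_right (h.trans hva.1).le
        have h2 : max v w = v := max_eq_left (h.trans hva.1).le
        rw [hminab, hmaxab, h1, h2]
        exact ⟨h, hva.1, hva.2⟩
      · left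
        have h1 : min v w = v := min_eq_left (hva.2.trans h).le
        have h2 : max v w = w := max_eq_right (hva.2.trans h).le
        rw [hminab, hmaxab, h1, h2]
        exact ⟨hva.1, hva.2, h⟩
    rw [hCdef, Finset.mem_filter]
    exact ⟨SimpleGraph.mem_edgeFinset.mpr hadj', a, b, v, w, rfl, rfl, hcross⟩
  -- step: crossing edges at least the outgoing incidences
  have key : ∑ v ∈ S, ((G.neighborFinset v) \ T).card ≤ C.card := by
    rw [← Finset.card_sigma]
    apply Finset.card_le_card_of_injOn (fun p => s(p.1, p.2))
    · intro p hp
      simp only [Finset.coe_sigma, Set.mem_sigma_iff, Finset.mem_coe, Finset.mem_sigma, Finset.mem_sdiff, SimpleGraph.mem_neighborFinset] at hp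
      exact hmemC p.1 p.2 hp.1 hp.2.1 hp.2.2
    · intro p hp q hq h
      simp only [Finset.coe_sigma, Set.mem_sigma_iff, Finset.mem_coe, Finset.mem_sdiff,
        SimpleGraph.mem_neighborFinset] at hp hq
      obtain ⟨v, w⟩ := p
      obtain ⟨v', w'⟩ := q
      simp only [Sym2.eq_iff] at h
      rcases h with ⟨h1, h2⟩ | ⟨h1, h2⟩
      · simp [h1, h2]
      · exfalso
        exact hq.2.2 (h1 ▸ hST hp.1)
  have hdeg : ∀ v ∈ S, G.degree v ≤ (l + 1) + ((G.neighborFinset v) \ T).card := by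
    intro v hv
    have hsplit : (G.neighborFinset v ∩ T).card + (G.neighborFinset v \ T).card
        = G.degree v := Finset.card_inter_add_card_sdiff _ _
    have hsub : G.neighborFinset v ∩ T ⊆ T.erase v := by
      intro x hx
      rw [Finset.mem_inter] at hx
      rw [Finset.mem_erase]
      exact ⟨(G.ne_of_adj ((SimpleGraph.mem_neighborFinset _ _ _).mp hx.1)).symm, hx.2⟩
    have h1 : (G.neighborFinset v ∩ T).card ≤ (T.erase v).card := Finset.card_le_card hsub
    have h2 : (T.erase v).card = T.card - 1 := Finset.card_erase_of_mem (hST hv)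
    have hTpos : 1 ≤ T.card := Finset.card_pos.mpr ⟨v, hST hv⟩
    omega
  have hsum : δ * l ≤ ∑ v ∈ S, G.degree v := by
    calc δ * l = ∑ _v ∈ S, δ := by rw [Finset.sum_const, hl, smul_eq_mul, mul_comm]
    _ ≤ ∑ v ∈ S, G.degree v := Finset.sum_le_sum fun v _ => hδ v
  have hsum2 : ∑ v ∈ S, G.degree v ≤ l * (l + 1) + ∑ v ∈ S, ((G.neighborFinset v) \ T).card := by
    calc ∑ v ∈ S, G.degree v
        ≤ ∑ v ∈ S, ((l + 1) + ((G.neighborFinset v) \ T).card) := Finset.sum_le_sum hdeg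
    _ = S.card * (l + 1) + ∑ v ∈ S, ((G.neighborFinset v) \ T).card := by
        rw [Finset.sum_add_distrib, Finset.sum_const, smul_eq_mul]
    _ = l * (l + 1) + ∑ v ∈ S, ((G.neighborFinset v) \ T).card := by rw [hl]
  omega
end

section
/- Every graph admitting an outer k-planar drawing has a vertex of degree at most √(4k+1) + 1; equivalently, the minimum degree of an outer k-planar graph is at most ⌊√(4k+1)⌋ + 1. -/
open Finset

open scoped Classical

private lemma interleave_of {n : ℕ} {x y z t : Fin n} (hxy : (x:ℕ) < (y:ℕ)) (h1 : (x:ℕ) < (z:ℕ))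
    (h2 : (z:ℕ) < (y:ℕ)) (h3 : (t:ℕ) < (x:ℕ) ∨ (y:ℕ) < (t:ℕ)) : Interleave x y z t := by
  have hxy' : x < y := Fin.lt_def.mpr hxy
  have hmin : min x y = x := min_eq_left hxy'.le
  have hmax : max x y = y := max_eq_right hxy'.le
  rcases h3 with h3 | h3
  · -- t < x < z : case two
    have htz : t < z := Fin.lt_def.mpr (by omega)
    right
    rw [hmin, hmax, min_eq_right htz.le, max_eq_left htz.le]
    exact ⟨Fin.lt_def.mpr h3, Fin.lt_def.mpr h1, Fin.lt_def.mpr h2⟩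
  · -- z < y < t : case one
    have hzt : z < t := Fin.lt_def.mpr (by omega)
    left
    rw [hmin, hmax, min_eq_left hzt.le, max_eq_right hzt.le]
    exact ⟨Fin.lt_def.mpr h1, Fin.lt_def.mpr h2, Fin.lt_def.mpr h3⟩

private lemma card_filter_ioo {V : Type*} [Fintype V] [DecidableEq V] {n : ℕ} (σ : V ≃ Fin n)
    (a b : ℕ) (hbn : b < n) :
    (Finset.univ.filter fun w : V => a < (σ w : ℕ) ∧ (σ w : ℕ) < b).card = b - a - 1 := by
  have h1 : (Finset.univ.filter fun w : V => a < (σ w : ℕ) ∧ (σ w : ℕ) < b).card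
      = (Finset.Ioo a b).card := by
    apply Finset.card_bij (fun w _ => ((σ w : ℕ)))
    · intro w hw
      simp only [Finset.mem_filter] at hw
      simp only [Finset.mem_Ioo]
      exact ⟨hw.2.1, hw.2.2⟩
    · intro w _ w' _ hval
      exact σ.injective (Fin.val_injective hval)
    · intro j hj
      simp only [Finset.mem_Ioo] at hj
      refine ⟨σ.symm ⟨j, by omega⟩, ?_, ?_⟩
      · simp only [Finset.mem_filter, Finset.mem_univ, true_and, Equiv.apply_symm_apply]
        exact ⟨hj.1, hj.2⟩
      · simp
  rw [h1, Nat.card_Ioo]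

private lemma card_filter_out {V : Type*} [Fintype V] [DecidableEq V] {n : ℕ} (σ : V ≃ Fin n)
    (a b : ℕ) (hab : a < b) (hbn : b < n) :
    (Finset.univ.filter fun w : V => (σ w : ℕ) < a ∨ b < (σ w : ℕ)).card = a + (n - b - 1) := by
  have h1 : (Finset.univ.filter fun w : V => (σ w : ℕ) < a ∨ b < (σ w : ℕ)).card
      = (Finset.range a ∪ Finset.Ioo b n).card := by
    apply Finset.card_bij (fun w _ => ((σ w : ℕ)))
    · intro w hw
      simp only [Finset.mem_filter] at hw
      simp only [Finset.mem_union, Finset.mem_range, Finset.mem_Ioo]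
      rcases hw.2 with h | h
      · exact Or.inl h
      · exact Or.inr ⟨h, (σ w).isLt⟩
    · intro w _ w' _ hval
      exact σ.injective (Fin.val_injective hval)
    · intro j hj
      simp only [Finset.mem_union, Finset.mem_range, Finset.mem_Ioo] at hj
      have hjn : j < n := by rcases hj with h | h <;> omega
      refine ⟨σ.symm ⟨j, hjn⟩, ?_, ?_⟩
      · simp only [Finset.mem_filter, Finset.mem_univ, true_and, Equiv.apply_symm_apply]
        rcases hj with h | h
        · exact Or.inl h
        · exact Or.inr h.1
      · simp
  rw [h1, Finset.card_union_of_disjoint, Finset.card_range, Nat.card_Ioo]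
  · rw [Finset.disjoint_left]
    intro j hj hj'
    simp only [Finset.mem_range] at hj
    simp only [Finset.mem_Ioo] at hj'
    omega

private lemma gaussIcc (m : ℕ) : 2 * ∑ i ∈ Finset.Icc 1 m, i = m * m + m := by
  induction m with
  | zero => simp
  | succ m ih =>
    rw [Finset.sum_Icc_succ_top (by omega : 1 ≤ m + 1)]
    have e : (m+1)*(m+1) = m*m + 2*m + 1 := by ring
    omega

private lemma Msum (hf b : ℕ) : 2 * ∑ i ∈ Finset.Icc 1 (hf + b), min i hf
    = hf * hf + hf + 2 * b * hf := by
  induction b with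
  | zero =>
    simp only [Nat.add_zero]
    have h1 : ∑ i ∈ Finset.Icc 1 hf, min i hf = ∑ i ∈ Finset.Icc 1 hf, i :=
      Finset.sum_congr rfl fun i hi => min_eq_left (Finset.mem_Icc.mp hi).2
    rw [h1, gaussIcc]
    omega
  | succ b ih =>
    rw [show hf + (b+1) = (hf+b)+1 from rfl,
      Finset.sum_Icc_succ_top (by omega : 1 ≤ hf + b + 1)]
    have hmin : min (hf + b + 1) hf = hf := min_eq_right (by omega)
    have e : 2*(b+1)*hf = 2*b*hf + 2*hf := by ring
    rw [hmin]
    omega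


private lemma core {V : Type*} [Fintype V] [DecidableEq V] (G : SimpleGraph V) [DecidableRel G.Adj]
    {k d hf a : ℕ} (u v : V) (A Out : Finset V) (F : Finset (Sym2 V)) (ι : V → ℕ)
    (hdeg : ∀ w, d + 2 ≤ G.degree w)
    (hk : k + 1 + hf * hf ≤ hf * (d + 1)) (hdh : 2 * hf ≤ d + 1)
    (hA : A.card = a) (hha : hf ≤ a)
    (hcover : ∀ w : V, w ∈ A ∨ w ∈ Out ∨ w = u ∨ w = v)
    (hdisj : ∀ w ∈ A, w ∉ Out)
    (hιA : ∀ w ∈ A, 1 ≤ ι w ∧ ι w ≤ a)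
    (hιu : ι u ≤ a + 1) (hιv : ι v ≤ a + 1)
    (hinj : ∀ w w', w ∉ Out → w' ∉ Out → ι w = ι w' → w = w')
    (hshort : ∀ w ∈ A, ∀ w', w' ∉ Out → G.Adj w w' → ι w' ≤ ι w + hf ∧ ι w ≤ ι w' + hf)
    (hFmem : ∀ w ∈ A, ∀ w' ∈ Out, G.Adj w w' → s(w, w') ∈ F)
    (hFk : F.card ≤ k) : False := by
  classical
  set L := a + 1 with hL
  -- the set of "ordered" adjacent pairs with first coordinate in A
  set P1 : Finset (V × V) := A.biUnion (fun w => (G.neighborFinset w).image (fun x => (w, x)))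
    with hP1
  have hP1mem : ∀ p : V × V, p ∈ P1 → p.1 ∈ A ∧ G.Adj p.1 p.2 := by
    intro p hp
    simp only [hP1, Finset.mem_biUnion, Finset.mem_image,
      SimpleGraph.mem_neighborFinset] at hp
    obtain ⟨w, hw, x, hx, rfl⟩ := hp
    exact ⟨hw, hx⟩
  have hP1card : a * (d + 2) ≤ P1.card := by
    have hc : P1.card = ∑ w ∈ A, G.degree w := by
      rw [hP1, Finset.card_biUnion]
      · refine Finset.sum_congr rfl fun w _ => ?_
        rw [Finset.card_image_of_injective _ (fun x y hxy => by
          simpa using congrArg Prod.snd hxy)]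
        rfl
      · intro w hw w' hw' hne
        rw [Function.onFun, Finset.disjoint_left]
        intro p hp hp'
        simp only [Finset.mem_image] at hp hp'
        obtain ⟨x, _, rfl⟩ := hp
        obtain ⟨x', _, h2⟩ := hp'
        exact hne (congrArg Prod.fst h2).symm
    have hs : A.card • (d + 2) ≤ ∑ w ∈ A, G.degree w :=
      Finset.card_nsmul_le_sum A _ _ (fun w _ => hdeg w)
    rw [hc]
    calc a * (d + 2) = A.card • (d + 2) := by rw [hA, smul_eq_mul]
    _ ≤ _ := hs
  have hsplit : (P1.filter fun p => p.2 ∈ Out).card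
      + (P1.filter fun p => ¬ p.2 ∈ Out).card = P1.card :=
    Finset.card_filter_add_card_filter_not _
  -- crossing edges bound
  have h1 : (P1.filter fun p => p.2 ∈ Out).card ≤ F.card := by
    apply Finset.card_le_card_of_injOn (fun p => s(p.1, p.2))
    · intro p hp
      rw [Finset.mem_coe, Finset.mem_filter] at hp
      obtain ⟨hA1, hadj⟩ := hP1mem p hp.1
      exact hFmem _ hA1 _ hp.2 hadj
    · intro p hp q hq hpq
      simp only [Finset.coe_filter, Set.mem_setOf_eq] at hp hq
      obtain ⟨hA1, _⟩ := hP1mem p hp.1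
      obtain ⟨hA2, _⟩ := hP1mem q hq.1
      rw [Sym2.eq_iff] at hpq
      rcases hpq with ⟨h11, h22⟩ | ⟨h12, h21⟩
      · exact Prod.ext h11 h22
      · exact absurd hq.2 (h12 ▸ hdisj _ hA1)
  -- block pairs bound
  set Pairs : Finset (ℕ × ℕ) := ((Finset.Icc 1 a) ×ˢ (Finset.Icc 0 L)).filter
      (fun q => q.1 ≠ q.2 ∧ q.2 ≤ q.1 + hf ∧ q.1 ≤ q.2 + hf) with hPairs
  have hblockι : ∀ w : V, w ∉ Out → ι w ≤ L := by
    intro w hw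
    rcases hcover w with h | h | rfl | rfl
    · exact le_trans (hιA w h).2 (by omega)
    · exact absurd h hw
    · exact hιu
    · exact hιv
  have h2 : (P1.filter fun p => ¬ p.2 ∈ Out).card ≤ Pairs.card := by
    apply Finset.card_le_card_of_injOn (fun p => (ι p.1, ι p.2))
    · intro p hp
      rw [Finset.mem_coe, Finset.mem_filter] at hp
      obtain ⟨hA1, hadj⟩ := hP1mem p hp.1
      have hno1 : p.1 ∉ Out := hdisj _ hA1
      have hno2 : p.2 ∉ Out := hp.2
      rw [hPairs, Finset.mem_coe, Finset.mem_filter, Finset.mem_product, Finset.mem_Icc, Finset.mem_Icc]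
      refine ⟨⟨⟨(hιA _ hA1).1, (hιA _ hA1).2⟩, ⟨Nat.zero_le _, hblockι _ hno2⟩⟩, ?_, ?_, ?_⟩
      · intro hceq
        exact G.irrefl ((hinj _ _ hno1 hno2 hceq) ▸ hadj)
      · exact (hshort _ hA1 _ hno2 hadj).1
      · exact (hshort _ hA1 _ hno2 hadj).2
    · intro p hp q hq hpq
      simp only [Finset.coe_filter, Set.mem_setOf_eq] at hp hq
      obtain ⟨hA1, _⟩ := hP1mem p hp.1
      obtain ⟨hA2, _⟩ := hP1mem q hq.1
      have e1 : ι p.1 = ι q.1 := congrArg Prod.fst hpq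
      have e2 : ι p.2 = ι q.2 := congrArg Prod.snd hpq
      exact Prod.ext (hinj _ _ (hdisj _ hA1) (hdisj _ hA2) e1)
        (hinj _ _ hp.2 hq.2 e2)
  -- Pairs cardinality bound
  have h3 : Pairs.card ≤ 2 * ∑ i ∈ Finset.Icc 1 a, min i hf := by
    have hfib : Pairs.card = ∑ i ∈ Finset.Icc 1 a,
        (Pairs.filter fun q => q.1 = i).card := by
      apply Finset.card_eq_sum_card_fiberwise
      intro q hq
      rw [Finset.mem_coe, hPairs, Finset.mem_filter, Finset.mem_product] at hq
      exact hq.1.1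
    have hfiber : ∀ i ∈ Finset.Icc 1 a, (Pairs.filter fun q => q.1 = i).card
        ≤ min i hf + min (L - i) hf := by
      intro i hi
      rw [Finset.mem_Icc] at hi
      have hiL : i ∈ Finset.Icc (i - hf) (min (i + hf) L) := by
        rw [Finset.mem_Icc]
        constructor
        · omega
        · simp only [le_min_iff]; omega
      have hsub : (Pairs.filter fun q => q.1 = i) ⊆
          ((Finset.Icc (i - hf) (min (i + hf) L)).erase i).image (fun j => (i, j)) := by
        intro q hq
        rw [Finset.mem_filter] at hq
        obtain ⟨hq1, hq2⟩ := hq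
        rw [hPairs, Finset.mem_filter, Finset.mem_product, Finset.mem_Icc, Finset.mem_Icc] at hq1
        obtain ⟨⟨_, ⟨_, hb2⟩⟩, hne, hd1, hd2⟩ := hq1
        rw [Finset.mem_image]
        refine ⟨q.2, ?_, ?_⟩
        · rw [Finset.mem_erase, Finset.mem_Icc]
          refine ⟨fun hc => hne (by omega), ?_, ?_⟩
          · omega
          · simp only [le_min_iff]; omega
        · rw [← hq2]
      calc (Pairs.filter fun q => q.1 = i).card
          ≤ (((Finset.Icc (i - hf) (min (i + hf) L)).erase i).image (fun j => (i, j))).card :=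
            Finset.card_le_card hsub
        _ ≤ ((Finset.Icc (i - hf) (min (i + hf) L)).erase i).card := Finset.card_image_le
        _ = (Finset.Icc (i - hf) (min (i + hf) L)).card - 1 := Finset.card_erase_of_mem hiL
        _ ≤ min i hf + min (L - i) hf := by
            rw [Nat.card_Icc]
            omega
    have hrefl : ∑ i ∈ Finset.Icc 1 a, min (L - i) hf = ∑ i ∈ Finset.Icc 1 a, min i hf := by
      apply Finset.sum_nbij' (fun i => L - i) (fun j => L - j)
      · intro i hi; rw [Finset.mem_Icc] at hi ⊢; omega
      · intro i hi; rw [Finset.mem_Icc] at hi ⊢; omega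
      · intro i hi; rw [Finset.mem_Icc] at hi; omega
      · intro i hi; rw [Finset.mem_Icc] at hi; omega
      · intro i hi; rfl
    calc Pairs.card = ∑ i ∈ Finset.Icc 1 a, (Pairs.filter fun q => q.1 = i).card := hfib
      _ ≤ ∑ i ∈ Finset.Icc 1 a, (min i hf + min (L - i) hf) := Finset.sum_le_sum hfiber
      _ = ∑ i ∈ Finset.Icc 1 a, min i hf + ∑ i ∈ Finset.Icc 1 a, min (L - i) hf :=
          Finset.sum_add_distrib
      _ = 2 * ∑ i ∈ Finset.Icc 1 a, min i hf := by rw [hrefl]; ring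
  -- arithmetic finish
  obtain ⟨b, rfl⟩ : ∃ b, a = hf + b := ⟨a - hf, by omega⟩
  have hM : 2 * ∑ i ∈ Finset.Icc 1 (hf + b), min i hf = hf * hf + hf + 2 * b * hf :=
    Msum hf b
  have hble : k + 1 + (hf * hf + hf + 2 * b * hf) ≤ (hf + b) * (d + 2) := by
    have e1 : (hf + b) * (d + 2) = hf * d + 2 * hf + b * d + 2 * b := by ring
    have e2 : hf * (d + 1) = hf * d + hf := by ring
    have e3 : 2 * b * hf = 2 * (b * hf) := by ring
    have hb2 : b * (2 * hf) ≤ b * (d + 1) := Nat.mul_le_mul_left b hdh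
    have e4 : b * (2 * hf) = 2 * (b * hf) := by ring
    have e5 : b * (d + 1) = b * d + b := by ring
    omega
  omega

/-- Every graph admitting an outer `k`-planar drawing has a vertex of degree at
most `⌊√(4k+1)⌋ + 1`. -/
theorem stmt4 (k : ℕ) {V : Type*} [Fintype V] [DecidableEq V] [Nonempty V]
    (G : SimpleGraph V) [DecidableRel G.Adj] (h : IsOuterKPlanar k G) :
    ∃ v : V, G.degree v ≤ Nat.sqrt (4 * k + 1) + 1 := by
  classical
  obtain ⟨σ, hσ⟩ := h
  by_contra hcon
  push_neg at hcon
  set d := Nat.sqrt (4 * k + 1) with hd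
  have hdeg : ∀ w, d + 2 ≤ G.degree w := fun w => by have := hcon w; omega
  have hd1 : 1 ≤ d := by
    rw [hd]
    have h1 : Nat.sqrt 1 ≤ Nat.sqrt (4 * k + 1) := Nat.sqrt_le_sqrt (by omega)
    simpa using h1
  set hf := (d + 1) / 2 with hhf
  have hdh : 2 * hf ≤ d + 1 := by omega
  have hf1 : 1 ≤ hf := by omega
  have hk' : k + 1 + hf * hf ≤ hf * (d + 1) := by
    have h2 := Nat.lt_succ_sqrt (4 * k + 1)
    rw [← hd] at h2
    have hlt : 4 * k + 1 < (d + 1) * (d + 1) := by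
      simpa [Nat.succ_eq_add_one] using h2
    have hcases : d + 1 = 2 * hf ∨ d + 1 = 2 * hf + 1 := by omega
    rcases hcases with hc | hc
    · have e1 : (d + 1) * (d + 1) = 4 * (hf * hf) := by rw [hc]; ring
      have e2 : hf * (d + 1) = 2 * (hf * hf) := by rw [hc]; ring
      omega
    · have e1 : (d + 1) * (d + 1) = 4 * (hf * hf) + 4 * hf + 1 := by rw [hc]; ring
      have e2 : hf * (d + 1) = 2 * (hf * hf) + hf := by rw [hc]; ring
      omega
  have hn3 : d + 3 ≤ Fintype.card V := by
    obtain ⟨v0⟩ := (inferInstance : Nonempty V)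
    have h1 := hdeg v0
    have h2 : G.degree v0 < Fintype.card V := G.degree_lt_card_verts v0
    omega
  have hpinj : ∀ {x y : V}, (σ x : ℕ) = (σ y : ℕ) → x = y :=
    fun hxy => σ.injective (Fin.val_injective hxy)
  -- there is an edge with a side containing at least hf vertices
  have hQex : ∃ m : ℕ, hf ≤ m ∧ ∃ x y : V, G.Adj x y ∧ (σ x : ℕ) < (σ y : ℕ) ∧
      (m = (Finset.univ.filter fun w : V =>
          (σ x : ℕ) < (σ w : ℕ) ∧ (σ w : ℕ) < (σ y : ℕ)).card ∨
       m = (Finset.univ.filter fun w : V =>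
          (σ w : ℕ) < (σ x : ℕ) ∨ (σ y : ℕ) < (σ w : ℕ)).card) := by
    have key : ∀ x y : V, G.Adj x y → (σ x : ℕ) < (σ y : ℕ) →
        ∃ m : ℕ, hf ≤ m ∧ ∃ x' y' : V, G.Adj x' y' ∧ (σ x' : ℕ) < (σ y' : ℕ) ∧
        (m = (Finset.univ.filter fun w : V =>
            (σ x' : ℕ) < (σ w : ℕ) ∧ (σ w : ℕ) < (σ y' : ℕ)).card ∨
         m = (Finset.univ.filter fun w : V =>
            (σ w : ℕ) < (σ x' : ℕ) ∨ (σ y' : ℕ) < (σ w : ℕ)).card) := by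
      intro x y hadj hxy
      have hyn : (σ y : ℕ) < Fintype.card V := (σ y).isLt
      have hic := card_filter_ioo σ (σ x : ℕ) (σ y : ℕ) hyn
      have hoc := card_filter_out σ (σ x : ℕ) (σ y : ℕ) hxy hyn
      by_cases hcase : hf ≤ (Finset.univ.filter fun w : V =>
          (σ x : ℕ) < (σ w : ℕ) ∧ (σ w : ℕ) < (σ y : ℕ)).card
      · exact ⟨_, hcase, x, y, hadj, hxy, Or.inl rfl⟩
      · refine ⟨_, ?_, x, y, hadj, hxy, Or.inr rfl⟩
        rw [hoc]
        rw [hic] at hcase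
        omega
    obtain ⟨v0⟩ := (inferInstance : Nonempty V)
    have hne : 0 < (G.neighborFinset v0).card := by
      have h1 := hdeg v0
      have h2 : G.degree v0 = (G.neighborFinset v0).card := rfl
      omega
    obtain ⟨u1, hu1⟩ := Finset.card_pos.mp hne
    rw [SimpleGraph.mem_neighborFinset] at hu1
    have hadj : G.Adj v0 u1 := hu1
    have hne2 : (σ v0 : ℕ) ≠ (σ u1 : ℕ) := fun hc => (G.ne_of_adj hadj) (hpinj hc)
    rcases Nat.lt_or_ge (σ v0 : ℕ) (σ u1 : ℕ) with hlt | hge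
    · exact key v0 u1 hadj hlt
    · exact key u1 v0 hadj.symm (by omega)
  set a := Nat.find hQex with ha
  obtain ⟨hha, x, y, hadj, hxy, hcase⟩ := Nat.find_spec hQex
  have hmin : ∀ m : ℕ, hf ≤ m → m < a → ∀ x' y' : V, G.Adj x' y' → (σ x' : ℕ) < (σ y' : ℕ) →
      m ≠ (Finset.univ.filter fun w : V =>
          (σ x' : ℕ) < (σ w : ℕ) ∧ (σ w : ℕ) < (σ y' : ℕ)).card ∧
      m ≠ (Finset.univ.filter fun w : V =>
          (σ w : ℕ) < (σ x' : ℕ) ∨ (σ y' : ℕ) < (σ w : ℕ)).card := by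
    intro m hm1 hm2 x' y' hadj' hlt'
    constructor
    · intro hc
      exact Nat.find_min hQex hm2 ⟨hm1, x', y', hadj', hlt', Or.inl hc⟩
    · intro hc
      exact Nat.find_min hQex hm2 ⟨hm1, x', y', hadj', hlt', Or.inr hc⟩
  have hFk := hσ s(x, y) (by
    simp only [SimpleGraph.mem_edgeFinset, SimpleGraph.mem_edgeSet]
    exact hadj)
  have hyn : (σ y : ℕ) < Fintype.card V := (σ y).isLt
  have hxn : (σ x : ℕ) < Fintype.card V := (σ x).isLt
  rcases hcase with hin | hout
  · -- chosen side: interior of the arc from x to y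
    have hic := card_filter_ioo σ (σ x : ℕ) (σ y : ℕ) hyn
    have haeq : a = (σ y : ℕ) - (σ x : ℕ) - 1 := hin.trans hic
    refine core G x y
      (Finset.univ.filter fun w : V => (σ x : ℕ) < (σ w : ℕ) ∧ (σ w : ℕ) < (σ y : ℕ))
      (Finset.univ.filter fun w : V => (σ w : ℕ) < (σ x : ℕ) ∨ (σ y : ℕ) < (σ w : ℕ))
      _
      (fun w => (σ w : ℕ) - (σ x : ℕ))
      hdeg hk' hdh hin.symm hha ?_ ?_ ?_ ?_ ?_ ?_ ?_ ?_ hFk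
    · -- cover
      intro w
      rcases Nat.lt_trichotomy (σ w : ℕ) (σ x : ℕ) with h1 | h1 | h1
      · exact Or.inr (Or.inl (Finset.mem_filter.mpr ⟨Finset.mem_univ _, Or.inl h1⟩))
      · exact Or.inr (Or.inr (Or.inl (hpinj h1)))
      · rcases Nat.lt_trichotomy (σ w : ℕ) (σ y : ℕ) with h2 | h2 | h2
        · exact Or.inl (Finset.mem_filter.mpr ⟨Finset.mem_univ _, h1, h2⟩)
        · exact Or.inr (Or.inr (Or.inr (hpinj h2)))
        · exact Or.inr (Or.inl (Finset.mem_filter.mpr ⟨Finset.mem_univ _, Or.inr h2⟩))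
    · -- disj
      intro w hw hw'
      simp only [Finset.mem_filter, Finset.mem_univ, true_and] at hw hw'
      omega
    · -- hιA
      intro w hw
      simp only [Finset.mem_filter, Finset.mem_univ, true_and] at hw
      omega
    · -- hιu
      omega
    · -- hιv
      omega
    · -- hinj
      intro w w' hw hw'
      simp only [Finset.mem_filter, Finset.mem_univ, true_and, not_or, not_lt] at hw hw'
      intro heq
      exact hpinj (by omega)
    · -- hshort
      intro w hw w' hw' hadj'
      simp only [Finset.mem_filter, Finset.mem_univ, true_and] at hw
      simp only [Finset.mem_filter, Finset.mem_univ, true_and, not_or, not_lt] at hw'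
      by_contra hcontra
      rw [not_and_or] at hcontra
      have hgap : ((σ w : ℕ) + hf + 1 ≤ (σ w' : ℕ) ∧ (σ w : ℕ) < (σ w' : ℕ)) ∨
          ((σ w' : ℕ) + hf + 1 ≤ (σ w : ℕ) ∧ (σ w' : ℕ) < (σ w : ℕ)) := by
        rcases hcontra with hc | hc
        · left; omega
        · right; omega
      rcases hgap with ⟨hg, hlt'⟩ | ⟨hg, hlt'⟩
      · have hcard := card_filter_ioo σ (σ w : ℕ) (σ w' : ℕ) (σ w').isLt
        have hm := hmin ((σ w' : ℕ) - (σ w : ℕ) - 1) (by omega) (by omega) w w' hadj' hlt'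
        exact hm.1 hcard.symm
      · have hcard := card_filter_ioo σ (σ w' : ℕ) (σ w : ℕ) (σ w).isLt
        have hm := hmin ((σ w : ℕ) - (σ w' : ℕ) - 1) (by omega) (by omega) w' w hadj'.symm hlt'
        exact hm.1 hcard.symm
    · -- hFmem
      intro w hw w' hw' hadj'
      simp only [Finset.mem_filter, Finset.mem_univ, true_and] at hw hw'
      rw [Finset.mem_filter]
      refine ⟨by simp only [SimpleGraph.mem_edgeFinset, SimpleGraph.mem_edgeSet]; exact hadj', ?_, ?_⟩
      · intro hc
        rw [Sym2.eq_iff] at hc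
        rcases hc with ⟨rfl, rfl⟩ | ⟨rfl, rfl⟩ <;> omega
      · exact ⟨σ x, σ y, σ w, σ w', Sym2.map_pair_eq _ _ _, Sym2.map_pair_eq _ _ _,
          interleave_of hxy hw.1 hw.2 hw'⟩
  · -- chosen side: exterior of the arc from x to y
    have hoc := card_filter_out σ (σ x : ℕ) (σ y : ℕ) hxy hyn
    have haeq : a = (σ x : ℕ) + (Fintype.card V - (σ y : ℕ) - 1) := hout.trans hoc
    have hblk : ∀ z : V, z ∉ (Finset.univ.filter fun w : V =>
        (σ x : ℕ) < (σ w : ℕ) ∧ (σ w : ℕ) < (σ y : ℕ)) →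
        (σ z : ℕ) ≤ (σ x : ℕ) ∨ (σ y : ℕ) ≤ (σ z : ℕ) := by
      intro z hz
      simp only [Finset.mem_filter, Finset.mem_univ, true_and, not_and, not_lt] at hz
      rcases le_or_gt (σ z : ℕ) (σ x : ℕ) with hc | hc
      · exact Or.inl hc
      · exact Or.inr (hz hc)
    refine core G x y
      (Finset.univ.filter fun w : V => (σ w : ℕ) < (σ x : ℕ) ∨ (σ y : ℕ) < (σ w : ℕ))
      (Finset.univ.filter fun w : V => (σ x : ℕ) < (σ w : ℕ) ∧ (σ w : ℕ) < (σ y : ℕ))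
      _
      (fun w => if (σ y : ℕ) ≤ (σ w : ℕ) then (σ w : ℕ) - (σ y : ℕ)
        else (σ w : ℕ) + (Fintype.card V - (σ y : ℕ)))
      hdeg hk' hdh hout.symm hha ?_ ?_ ?_ ?_ ?_ ?_ ?_ ?_ hFk
    · -- cover
      intro w
      rcases Nat.lt_trichotomy (σ w : ℕ) (σ x : ℕ) with h1 | h1 | h1
      · exact Or.inl (Finset.mem_filter.mpr ⟨Finset.mem_univ _, Or.inl h1⟩)
      · exact Or.inr (Or.inr (Or.inl (hpinj h1)))
      · rcases Nat.lt_trichotomy (σ w : ℕ) (σ y : ℕ) with h2 | h2 | h2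
        · exact Or.inr (Or.inl (Finset.mem_filter.mpr ⟨Finset.mem_univ _, h1, h2⟩))
        · exact Or.inr (Or.inr (Or.inr (hpinj h2)))
        · exact Or.inl (Finset.mem_filter.mpr ⟨Finset.mem_univ _, Or.inr h2⟩)
    · -- disj
      intro w hw hw'
      simp only [Finset.mem_filter, Finset.mem_univ, true_and] at hw hw'
      omega
    · -- hιA
      intro w hw
      simp only [Finset.mem_filter, Finset.mem_univ, true_and] at hw
      have hwn : (σ w : ℕ) < Fintype.card V := (σ w).isLt
      split_ifs with hb <;> omega
    · -- hιu
      split_ifs with hb <;> omega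
    · -- hιv
      split_ifs with hb <;> omega
    · -- hinj
      intro w w' hw hw'
      have hw2 := hblk w hw
      have hw'2 := hblk w' hw'
      have hwn : (σ w : ℕ) < Fintype.card V := (σ w).isLt
      have hw'n : (σ w' : ℕ) < Fintype.card V := (σ w').isLt
      intro heq
      split_ifs at heq with hb1 hb2 hb2
      · exact hpinj (by omega)
      · exact hpinj (by omega)
      · exact hpinj (by omega)
      · exact hpinj (by omega)
    · -- hshort
      intro w hw w' hw' hadj'
      simp only [Finset.mem_filter, Finset.mem_univ, true_and] at hw
      have hblk' := hblk w' hw'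
      have hwn : (σ w : ℕ) < Fintype.card V := (σ w).isLt
      have hw'n : (σ w' : ℕ) < Fintype.card V := (σ w').isLt
      by_contra hcontra
      rw [not_and_or] at hcontra
      by_cases hbw : (σ y : ℕ) ≤ (σ w : ℕ) <;> by_cases hbw' : (σ y : ℕ) ≤ (σ w' : ℕ)
      · -- both on the high side
        rw [if_pos hbw, if_pos hbw'] at hcontra
        have hgap : ((σ w : ℕ) + hf + 1 ≤ (σ w' : ℕ) ∧ (σ w : ℕ) < (σ w' : ℕ)) ∨
            ((σ w' : ℕ) + hf + 1 ≤ (σ w : ℕ) ∧ (σ w' : ℕ) < (σ w : ℕ)) := by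
          rcases hcontra with hc | hc
          · left; omega
          · right; omega
        rcases hgap with ⟨hg, hlt'⟩ | ⟨hg, hlt'⟩
        · have hcard := card_filter_ioo σ (σ w : ℕ) (σ w' : ℕ) hw'n
          have hm := hmin ((σ w' : ℕ) - (σ w : ℕ) - 1) (by omega) (by omega) w w' hadj' hlt'
          exact hm.1 hcard.symm
        · have hcard := card_filter_ioo σ (σ w' : ℕ) (σ w : ℕ) hwn
          have hm := hmin ((σ w : ℕ) - (σ w' : ℕ) - 1) (by omega) (by omega) w' w hadj'.symm hlt'
          exact hm.1 hcard.symm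
      · -- w high, w' low : outer chord (w', w)
        rw [if_pos hbw, if_neg hbw'] at hcontra
        have hw'2 : (σ w' : ℕ) ≤ (σ x : ℕ) := by omega
        have hg : hf + 1 ≤ (σ w' : ℕ) + Fintype.card V - (σ w : ℕ) := by
          rcases hcontra with hc | hc
          · omega
          · omega
        have hcard := card_filter_out σ (σ w' : ℕ) (σ w : ℕ) (by omega) hwn
        have hm := hmin ((σ w' : ℕ) + (Fintype.card V - (σ w : ℕ) - 1)) (by omega) (by omega)
          w' w hadj'.symm (by omega)
        exact hm.2 hcard.symm
      · -- w low, w' high : outer chord (w, w')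
        rw [if_neg hbw, if_pos hbw'] at hcontra
        have hw2 : (σ w : ℕ) < (σ x : ℕ) := by omega
        have hg : hf + 1 ≤ (σ w : ℕ) + Fintype.card V - (σ w' : ℕ) := by
          rcases hcontra with hc | hc
          · omega
          · omega
        have hcard := card_filter_out σ (σ w : ℕ) (σ w' : ℕ) (by omega) hw'n
        have hm := hmin ((σ w : ℕ) + (Fintype.card V - (σ w' : ℕ) - 1)) (by omega) (by omega)
          w w' hadj' (by omega)
        exact hm.2 hcard.symm
      · -- both low
        rw [if_neg hbw, if_neg hbw'] at hcontra
        have hw2 : (σ w : ℕ) < (σ x : ℕ) := by omega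
        have hgap : ((σ w : ℕ) + hf + 1 ≤ (σ w' : ℕ) ∧ (σ w : ℕ) < (σ w' : ℕ)) ∨
            ((σ w' : ℕ) + hf + 1 ≤ (σ w : ℕ) ∧ (σ w' : ℕ) < (σ w : ℕ)) := by
          rcases hcontra with hc | hc
          · left; omega
          · right; omega
        rcases hgap with ⟨hg, hlt'⟩ | ⟨hg, hlt'⟩
        · have hcard := card_filter_ioo σ (σ w : ℕ) (σ w' : ℕ) hw'n
          have hm := hmin ((σ w' : ℕ) - (σ w : ℕ) - 1) (by omega) (by omega) w w' hadj' hlt'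
          exact hm.1 hcard.symm
        · have hcard := card_filter_ioo σ (σ w' : ℕ) (σ w : ℕ) hwn
          have hm := hmin ((σ w : ℕ) - (σ w' : ℕ) - 1) (by omega) (by omega) w' w hadj'.symm hlt'
          exact hm.1 hcard.symm
    · -- hFmem
      intro w hw w' hw' hadj'
      simp only [Finset.mem_filter, Finset.mem_univ, true_and] at hw hw'
      rw [Finset.mem_filter]
      refine ⟨by simp only [SimpleGraph.mem_edgeFinset, SimpleGraph.mem_edgeSet]; exact hadj', ?_, ?_⟩
      · intro hc
        rw [Sym2.eq_iff] at hc
        rcases hc with ⟨rfl, rfl⟩ | ⟨rfl, rfl⟩ <;> omega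
      · exact ⟨σ x, σ y, σ w', σ w, Sym2.map_pair_eq _ _ _,
          (Sym2.map_pair_eq _ _ _).trans Sym2.eq_swap,
          interleave_of hxy hw'.1 hw'.2 hw⟩
end

section
/- Every graph admitting an outer k-planar drawing is (⌊√(4k+1)⌋ + 1)-degenerate: every subgraph contains a vertex of degree at most ⌊√(4k+1)⌋ + 1. -/
open Finset

open scoped Classical

private lemma gauss_aux (m : ℕ) : 2 * ∑ j ∈ Finset.range m, (m - j) = m * (m + 1) := by
  induction m with
  | zero => simp
  | succ p ih =>
    have h2 : ∑ j ∈ Finset.range p, (p + 1 - j) = ∑ j ∈ Finset.range p, ((p - j) + 1) := by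
      refine Finset.sum_congr rfl fun j hj => ?_
      have := Finset.mem_range.mp hj
      omega
    have h1 : ∑ j ∈ Finset.range (p + 1), (p + 1 - j)
        = (∑ j ∈ Finset.range p, (p - j)) + (p + 1) := by
      rw [Finset.sum_range_succ, h2, Finset.sum_add_distrib, Finset.sum_const,
        Finset.card_range]
      simp
      omega
    have hr : (p + 1) * (p + 1 + 1) = p * (p + 1) + 2 * (p + 1) := by ring
    rw [h1]
    linarith [ih, hr]

private lemma cross_aux {n : ℕ} {a c z w : Fin n} (h1 : a < z) (h2 : z < c)
    (h3 : w < a ∨ c < w) : Sym2Cross s(a, c) s(z, w) := by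
  refine ⟨a, c, z, w, rfl, rfl, ?_⟩
  have hac : a < c := h1.trans h2
  have e3 : min a c = a := min_eq_left hac.le
  have e4 : max a c = c := max_eq_right hac.le
  unfold Interleave
  rcases h3 with h3 | h3
  · have hwz : w < z := h3.trans h1
    have e1 : min z w = w := min_eq_right hwz.le
    have e2 : max z w = z := max_eq_left hwz.le
    right; rw [e1, e2, e3, e4]; exact ⟨h3, h1, h2⟩
  · have hzw : z < w := h2.trans h3
    have e1 : min z w = z := min_eq_left hzw.le
    have e2 : max z w = w := max_eq_right hzw.le
    left; rw [e1, e2, e3, e4]; exact ⟨h1, h2, h3⟩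

section Aux

variable {V : Type*} [Fintype V] [DecidableEq V]

private noncomputable def Intv (σ : V ≃ Fin (Fintype.card V)) (t : Finset V) (a c : V) : Finset V :=
  t.filter fun z => (σ a : ℕ) < (σ z : ℕ) ∧ (σ z : ℕ) < (σ c : ℕ)

private noncomputable def OutN (σ : V ≃ Fin (Fintype.card V)) (t : Finset V) (H : SimpleGraph V)
    (a c z : V) : Finset V :=
  t.filter fun w => H.Adj z w ∧ ((σ w : ℕ) < (σ a : ℕ) ∨ (σ c : ℕ) < (σ w : ℕ))

private lemma pinj (σ : V ≃ Fin (Fintype.card V)) {v w : V}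
    (h : (σ v : ℕ) = (σ w : ℕ)) : v = w :=
  σ.injective (Fin.val_injective h)

private lemma mem_Intv {σ : V ≃ Fin (Fintype.card V)} {t : Finset V} {a c z : V} :
    z ∈ Intv σ t a c ↔ z ∈ t ∧ (σ a : ℕ) < (σ z : ℕ) ∧ (σ z : ℕ) < (σ c : ℕ) := by
  simp [Intv]

private lemma mem_OutN {σ : V ≃ Fin (Fintype.card V)} {t : Finset V} {H : SimpleGraph V}
    {a c z w : V} :
    w ∈ OutN σ t H a c z ↔
      w ∈ t ∧ H.Adj z w ∧ ((σ w : ℕ) < (σ a : ℕ) ∨ (σ c : ℕ) < (σ w : ℕ)) := by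
  simp [OutN]

/-- Main counting lemma: the edges from interior vertices to the outside all cross
the edge `{a,c}`, and they are pairwise distinct. -/
private lemma sum_out_le (k : ℕ) (G H : SimpleGraph V) (hH : H ≤ G)
    (σ : V ≃ Fin (Fintype.card V))
    (hσ : ∀ e ∈ G.edgeFinset,
      (G.edgeFinset.filter (fun f => f ≠ e ∧ Sym2Cross (e.map σ) (f.map σ))).card ≤ k)
    (t : Finset V) {a c : V} (hadj : H.Adj a c) (hlt : (σ a : ℕ) < (σ c : ℕ)) :
    ∑ z ∈ Intv σ t a c, (OutN σ t H a c z).card ≤ k := by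
  classical
  have hGac : G.Adj a c := hH hadj
  have heF : s(a, c) ∈ G.edgeFinset := by
    rw [SimpleGraph.mem_edgeFinset]
    exact hGac
  have hdisj : ∀ z₁ ∈ Intv σ t a c, ∀ z₂ ∈ Intv σ t a c, z₁ ≠ z₂ →
      Disjoint ((OutN σ t H a c z₁).image (fun w => s(z₁, w)))
        ((OutN σ t H a c z₂).image (fun w => s(z₂, w))) := by
    intro z₁ h1 z₂ h2 hne
    rw [Finset.disjoint_left]
    rintro e he1 he2
    obtain ⟨w₁, hw1, rfl⟩ := Finset.mem_image.mp he1
    obtain ⟨w₂, hw2, heq⟩ := Finset.mem_image.mp he2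
    rw [Sym2.eq_iff] at heq
    obtain ⟨hz, -⟩ | ⟨hz, hw⟩ := heq
    · exact hne hz.symm
    · -- z₂ = w₁ : but w₁ is outside, z₂ inside
      obtain ⟨-, -, hout⟩ := mem_OutN.mp hw1
      obtain ⟨-, hin1, hin2⟩ := mem_Intv.mp h2
      rw [← hz] at hout
      omega
  have hcard : ((Intv σ t a c).biUnion
        (fun z => (OutN σ t H a c z).image (fun w => s(z, w)))).card
      = ∑ z ∈ Intv σ t a c, (OutN σ t H a c z).card := by
    rw [Finset.card_biUnion hdisj]
    refine Finset.sum_congr rfl fun z hz => ?_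
    apply Finset.card_image_of_injOn
    intro w₁ hw1 w₂ hw2 heq
    rw [Sym2.eq_iff] at heq
    obtain ⟨-, h⟩ | ⟨h1', h2'⟩ := heq
    · exact h
    · -- z = w₂ : outside vs inside
      obtain ⟨-, -, hout⟩ := mem_OutN.mp hw2
      obtain ⟨-, hin1, hin2⟩ := mem_Intv.mp hz
      rw [← h1'] at hout
      omega
  have hsub : ((Intv σ t a c).biUnion
        (fun z => (OutN σ t H a c z).image (fun w => s(z, w))))
      ⊆ G.edgeFinset.filter
          (fun f => f ≠ s(a, c) ∧ Sym2Cross ((s(a, c) : Sym2 V).map σ) (f.map σ)) := by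
    intro e he
    obtain ⟨z, hz, he'⟩ := Finset.mem_biUnion.mp he
    obtain ⟨w, hw, rfl⟩ := Finset.mem_image.mp he'
    obtain ⟨-, hzadj, hout⟩ := mem_OutN.mp hw
    obtain ⟨-, hin1, hin2⟩ := mem_Intv.mp hz
    rw [Finset.mem_filter]
    refine ⟨?_, ?_, ?_⟩
    · rw [SimpleGraph.mem_edgeFinset]
      exact hH hzadj
    · intro hcon
      rw [Sym2.eq_iff] at hcon
      obtain ⟨h1', -⟩ | ⟨h1', -⟩ := hcon
      · rw [h1'] at hin1; omega
      · rw [h1'] at hin2; omega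
    · rw [Sym2.map_pair_eq, Sym2.map_pair_eq]
      refine cross_aux ?_ ?_ ?_
      · exact Fin.lt_def.mpr hin1
      · exact Fin.lt_def.mpr hin2
      · rcases hout with h | h
        · exact Or.inl (Fin.lt_def.mpr h)
        · exact Or.inr (Fin.lt_def.mpr h)
  calc ∑ z ∈ Intv σ t a c, (OutN σ t H a c z).card
      = _ := hcard.symm
    _ ≤ (G.edgeFinset.filter
          (fun f => f ≠ s(a, c) ∧ Sym2Cross ((s(a, c) : Sym2 V).map σ) (f.map σ))).card :=
        Finset.card_le_card hsub
    _ ≤ k := hσ _ heF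



/-- Every interior vertex has at most `g+1` neighbours inside the closed interval. -/
private lemma deg_split (H : SimpleGraph V) (σ : V ≃ Fin (Fintype.card V))
    (t : Finset V) (δ : ℕ)
    (hdeg : ∀ v ∈ t, δ ≤ (t.filter fun u => H.Adj v u).card)
    {a c z : V} (hz : z ∈ Intv σ t a c) :
    δ ≤ (Intv σ t a c).card + 1 + (OutN σ t H a c z).card := by
  classical
  obtain ⟨hzt, hza, hzc⟩ := mem_Intv.mp hz
  have hsub : t.filter (fun u => H.Adj z u) ⊆
      insert a (insert c ((Intv σ t a c).erase z)) ∪ OutN σ t H a c z := by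
    intro w hw
    obtain ⟨hwt, hwadj⟩ := Finset.mem_filter.mp hw
    by_cases h1 : (σ w : ℕ) < (σ a : ℕ)
    · exact Finset.mem_union_right _ (mem_OutN.mpr ⟨hwt, hwadj, Or.inl h1⟩)
    by_cases h2 : (σ c : ℕ) < (σ w : ℕ)
    · exact Finset.mem_union_right _ (mem_OutN.mpr ⟨hwt, hwadj, Or.inr h2⟩)
    apply Finset.mem_union_left
    by_cases h3 : w = a
    · simp [h3]
    by_cases h4 : w = c
    · simp [h4]
    have hwa : (σ a : ℕ) < (σ w : ℕ) := by
      rcases lt_or_eq_of_le (not_lt.mp h1) with h | h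
      · exact h
      · exact absurd (pinj σ h.symm) h3
    have hwc : (σ w : ℕ) < (σ c : ℕ) := by
      rcases lt_or_eq_of_le (not_lt.mp h2) with h | h
      · exact h
      · exact absurd (pinj σ h) h4
    have hwz : w ≠ z := fun h => by
      rw [h] at hwadj
      exact H.irrefl hwadj
    refine Finset.mem_insert_of_mem (Finset.mem_insert_of_mem ?_)
    exact Finset.mem_erase.mpr ⟨hwz, mem_Intv.mpr ⟨hwt, hwa, hwc⟩⟩
  have h5 := Finset.card_le_card hsub
  have h6 := Finset.card_union_le (insert a (insert c ((Intv σ t a c).erase z)))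
      (OutN σ t H a c z)
  have h7 := Finset.card_insert_le a (insert c ((Intv σ t a c).erase z))
  have h8 := Finset.card_insert_le c ((Intv σ t a c).erase z)
  have h9 : ((Intv σ t a c).erase z).card = (Intv σ t a c).card - 1 :=
    Finset.card_erase_of_mem hz
  have h10 : 1 ≤ (Intv σ t a c).card := Finset.card_pos.mpr ⟨z, hz⟩
  have h11 := hdeg z hzt
  omega

/-- Pointwise crossing bound: an edge with `g` interior vertices has at least
`g * (δ - 1 - g)` crossings. -/
private lemma pointwise (k : ℕ) (G H : SimpleGraph V) (hH : H ≤ G)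
    (σ : V ≃ Fin (Fintype.card V))
    (hσ : ∀ e ∈ G.edgeFinset,
      (G.edgeFinset.filter (fun f => f ≠ e ∧ Sym2Cross (e.map σ) (f.map σ))).card ≤ k)
    (t : Finset V) (δ : ℕ)
    (hdeg : ∀ v ∈ t, δ ≤ (t.filter fun u => H.Adj v u).card)
    {a c : V} (hadj : H.Adj a c) (hlt : (σ a : ℕ) < (σ c : ℕ)) :
    (Intv σ t a c).card * (δ - 1 - (Intv σ t a c).card) ≤ k := by
  classical
  have h1 := sum_out_le k G H hH σ hσ t hadj hlt
  have h2 : ∀ z ∈ Intv σ t a c,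
      (δ - 1 - (Intv σ t a c).card) ≤ (OutN σ t H a c z).card := by
    intro z hz
    have := deg_split H σ t δ hdeg hz
    omega
  calc (Intv σ t a c).card * (δ - 1 - (Intv σ t a c).card)
      = ∑ _z ∈ Intv σ t a c, (δ - 1 - (Intv σ t a c).card) := by
        rw [Finset.sum_const, smul_eq_mul]
    _ ≤ ∑ z ∈ Intv σ t a c, (OutN σ t H a c z).card := Finset.sum_le_sum h2
    _ ≤ k := h1



private noncomputable def LeftN (σ : V ≃ Fin (Fintype.card V)) (t : Finset V)
    (H : SimpleGraph V) (u z : V) : Finset V :=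
  t.filter fun w => H.Adj z w ∧ (σ u : ℕ) ≤ (σ w : ℕ) ∧ (σ w : ℕ) < (σ z : ℕ)

private noncomputable def RightN (σ : V ≃ Fin (Fintype.card V)) (t : Finset V)
    (H : SimpleGraph V) (v z : V) : Finset V :=
  t.filter fun w => H.Adj z w ∧ (σ z : ℕ) < (σ w : ℕ) ∧ (σ w : ℕ) ≤ (σ v : ℕ)

private lemma mem_LeftN {σ : V ≃ Fin (Fintype.card V)} {t : Finset V} {H : SimpleGraph V}
    {u z w : V} : w ∈ LeftN σ t H u z ↔
      w ∈ t ∧ H.Adj z w ∧ (σ u : ℕ) ≤ (σ w : ℕ) ∧ (σ w : ℕ) < (σ z : ℕ) := by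
  simp [LeftN]

private lemma mem_RightN {σ : V ≃ Fin (Fintype.card V)} {t : Finset V} {H : SimpleGraph V}
    {v z w : V} : w ∈ RightN σ t H v z ↔
      w ∈ t ∧ H.Adj z w ∧ (σ z : ℕ) < (σ w : ℕ) ∧ (σ w : ℕ) ≤ (σ v : ℕ) := by
  simp [RightN]

set_option maxHeartbeats 2000000 in
private theorem core_false (k : ℕ) (G H : SimpleGraph V) (hH : H ≤ G)
    (σ : V ≃ Fin (Fintype.card V))
    (hσ : ∀ e ∈ G.edgeFinset,
      (G.edgeFinset.filter (fun f => f ≠ e ∧ Sym2Cross (e.map σ) (f.map σ))).card ≤ k)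
    (t : Finset V) (ht : t.Nonempty)
    (hdeg : ∀ v ∈ t, Nat.sqrt (4 * k + 1) + 2 ≤ (t.filter fun u => H.Adj v u).card) :
    False := by
  classical
  set d := Nat.sqrt (4 * k + 1) with hd
  set δ := d + 2 with hδdef
  set q := (d + 1) / 2 with hqdef
  have hd1 : 1 ≤ d := by rw [hd]; exact Nat.le_sqrt.mpr (by omega)
  have hq3 : 1 ≤ q := by omega
  have hq2 : 2 * q + 1 ≤ δ := by omega
  have hsq : 4 * k + 1 < (d + 1) * (d + 1) := by
    rw [hd]
    simpa [Nat.succ_eq_add_one] using Nat.lt_succ_sqrt (4 * k + 1)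
  have hq1 : k + 1 ≤ q * (δ - 1 - q) := by
    have hd1q : δ - 1 - q = d + 1 - q := by omega
    rw [hd1q]
    rcases Nat.even_or_odd (d + 1) with ⟨a, ha⟩ | ⟨a, ha⟩
    · have hqa : q = a := by omega
      have key : (d + 1) * (d + 1) = 4 * (a * a) := by rw [ha]; ring
      have hgoal : d + 1 - q = a := by omega
      rw [hgoal, hqa]
      omega
    · have hqa : q = a := by omega
      have key : (d + 1) * (d + 1) = 4 * (a * a) + 4 * a + 1 := by rw [ha]; ring
      have hgoal : d + 1 - q = a + 1 := by omega
      have key2 : a * (a + 1) = a * a + a := by ring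
      rw [hgoal, hqa, key2]
      omega
  -- the zone dichotomy
  have zone : ∀ va vc : V, va ∈ t → vc ∈ t → H.Adj va vc → (σ va : ℕ) < (σ vc : ℕ) →
      (Intv σ t va vc).card < q ∨ δ ≤ (Intv σ t va vc).card + q := by
    intro va vc hva hvc hadj hlt
    by_contra hcon
    push_neg at hcon
    obtain ⟨hc1, hc2⟩ := hcon
    have hpt := pointwise k G H hH σ hσ t δ hdeg hadj hlt
    set g := (Intv σ t va vc).card with hg
    -- q ≤ g, g + q < δ, g * (δ - 1 - g) ≤ k, k + 1 ≤ q * (δ - 1 - q) : contradiction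
    obtain ⟨x, hx⟩ : ∃ x, g = q + x := ⟨g - q, by omega⟩
    obtain ⟨y, hy⟩ : ∃ y, δ - 1 = g + q + y := ⟨δ - 1 - g - q, by omega⟩
    have e1 : δ - 1 - g = q + y := by omega
    have e2 : δ - 1 - q = q + x + y := by omega
    rw [e1, hx] at hpt
    rw [e2] at hq1
    have e3 : q * (q + x + y) ≤ (q + x) * (q + y) := by nlinarith
    omega
  -- leftmost vertex gives a long edge
  obtain ⟨x, hxt, hxmin⟩ := t.exists_min_image (fun v => (σ v : ℕ)) ht
  have hNx : δ ≤ (t.filter fun u => H.Adj x u).card := hdeg x hxt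
  have hNne : (t.filter fun u => H.Adj x u).Nonempty := Finset.card_pos.mp (by omega)
  obtain ⟨y, hy, hymax⟩ := (t.filter fun u => H.Adj x u).exists_max_image
    (fun v => (σ v : ℕ)) hNne
  obtain ⟨hyt, hyadj⟩ := Finset.mem_filter.mp hy
  have hxy : (σ x : ℕ) < (σ y : ℕ) := by
    rcases lt_or_eq_of_le (hxmin y hyt) with h | h
    · exact h
    · exact absurd (pinj σ h) hyadj.ne
  have hsubN : (t.filter fun u => H.Adj x u).erase y ⊆ Intv σ t x y := by
    intro w hw
    obtain ⟨hwy, hw'⟩ := Finset.mem_erase.mp hw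
    obtain ⟨hwt, hwadj⟩ := Finset.mem_filter.mp hw'
    refine mem_Intv.mpr ⟨hwt, ?_, ?_⟩
    · rcases lt_or_eq_of_le (hxmin w hwt) with h | h
      · exact h
      · exact absurd (pinj σ h) hwadj.ne
    · rcases lt_or_eq_of_le (hymax w hw') with h | h
      · exact h
      · exact absurd (pinj σ h) hwy
  have hgxy : δ - 1 ≤ (Intv σ t x y).card := by
    have h1 := Finset.card_le_card hsubN
    rw [Finset.card_erase_of_mem hy] at h1
    omega
  have hlongxy : δ ≤ (Intv σ t x y).card + q := by
    rcases zone x y hxt hyt hyadj hxy with h | h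
    · omega
    · exact h
  -- minimal long edge
  set LP : Finset (V × V) := (t ×ˢ t).filter
    (fun p => H.Adj p.1 p.2 ∧ (σ p.1 : ℕ) < (σ p.2 : ℕ) ∧
      δ ≤ (Intv σ t p.1 p.2).card + q) with hLP
  have hLPne : LP.Nonempty := by
    refine ⟨(x, y), ?_⟩
    rw [hLP, Finset.mem_filter]
    exact ⟨Finset.mem_product.mpr ⟨hxt, hyt⟩, hyadj, hxy, hlongxy⟩
  obtain ⟨p0, hp0, hp0min⟩ := LP.exists_min_image (fun p => (Intv σ t p.1 p.2).card) hLPne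
  obtain ⟨u, v⟩ := p0
  rw [hLP, Finset.mem_filter] at hp0
  obtain ⟨hp0uv, huvadj, huvlt, hlong⟩ := hp0
  obtain ⟨hut, hvt⟩ := Finset.mem_product.mp hp0uv
  set I := Intv σ t u v with hI
  set Gx := I.card with hGx
  have hGq : q + 1 ≤ Gx := by omega
  -- every edge inside the closed interval [u,v] other than uv itself is short
  have hshort : ∀ za zc : V, za ∈ t → zc ∈ t → H.Adj za zc →
      (σ za : ℕ) < (σ zc : ℕ) → (σ u : ℕ) ≤ (σ za : ℕ) → (σ zc : ℕ) ≤ (σ v : ℕ) →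
      ((σ u : ℕ) < (σ za : ℕ) ∨ (σ zc : ℕ) < (σ v : ℕ)) →
      (Intv σ t za zc).card < q := by
    intro za zc hza hzc hadj hlt hua hcv hside
    have hsub : (Intv σ t za zc).card ≤ Gx - 1 := by
      rcases hside with hs | hs
      · have h1 : Intv σ t za zc ⊆ I.erase za := by
          intro w hw
          obtain ⟨hwt, hw1, hw2⟩ := mem_Intv.mp hw
          refine Finset.mem_erase.mpr ⟨?_, mem_Intv.mpr ⟨hwt, by omega, by omega⟩⟩
          intro hcon; rw [hcon] at hw1; omega
        have h2 : za ∈ I := mem_Intv.mpr ⟨hza, hs, by omega⟩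
        have h3 := Finset.card_le_card h1
        rw [Finset.card_erase_of_mem h2] at h3
        omega
      · have h1 : Intv σ t za zc ⊆ I.erase zc := by
          intro w hw
          obtain ⟨hwt, hw1, hw2⟩ := mem_Intv.mp hw
          refine Finset.mem_erase.mpr ⟨?_, mem_Intv.mpr ⟨hwt, by omega, by omega⟩⟩
          intro hcon; rw [hcon] at hw2; omega
        have h2 : zc ∈ I := mem_Intv.mpr ⟨hzc, by omega, hs⟩
        have h3 := Finset.card_le_card h1
        rw [Finset.card_erase_of_mem h2] at h3
        omega
    rcases zone za zc hza hzc hadj hlt with h | h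
    · exact h
    · -- it would be a long edge shorter than the minimal one
      have : (za, zc) ∈ LP := by
        rw [hLP, Finset.mem_filter]
        exact ⟨Finset.mem_product.mpr ⟨hza, hzc⟩, hadj, hlt, h⟩
      have := hp0min (za, zc) this
      simp only at this
      omega
  -- bounded number of closed-interval neighbours on each side
  have hLb : ∀ z ∈ I, (LeftN σ t H u z).card ≤ q := by
    intro z hz
    obtain ⟨hzt, hz1, hz2⟩ := mem_Intv.mp hz
    by_contra hcon
    push_neg at hcon
    have hne : (LeftN σ t H u z).Nonempty := Finset.card_pos.mp (by omega)
    obtain ⟨c₀, hc₀, hc₀min⟩ := (LeftN σ t H u z).exists_min_image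
      (fun w => (σ w : ℕ)) hne
    obtain ⟨hc₀t, hc₀adj, hc₀u, hc₀z⟩ := mem_LeftN.mp hc₀
    have hsub : (LeftN σ t H u z).erase c₀ ⊆ Intv σ t c₀ z := by
      intro w hw
      obtain ⟨hwc, hw'⟩ := Finset.mem_erase.mp hw
      obtain ⟨hwt, hwadj, hwu, hwz⟩ := mem_LeftN.mp hw'
      refine mem_Intv.mpr ⟨hwt, ?_, hwz⟩
      rcases lt_or_eq_of_le (hc₀min w hw') with h | h
      · exact h
      · exact absurd (pinj σ h) (Ne.symm hwc)
    have h1 := Finset.card_le_card hsub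
    rw [Finset.card_erase_of_mem hc₀] at h1
    have h2 := hshort c₀ z hc₀t hzt hc₀adj.symm hc₀z hc₀u (by omega) (Or.inr hz2)
    omega
  have hRb : ∀ z ∈ I, (RightN σ t H v z).card ≤ q := by
    intro z hz
    obtain ⟨hzt, hz1, hz2⟩ := mem_Intv.mp hz
    by_contra hcon
    push_neg at hcon
    have hne : (RightN σ t H v z).Nonempty := Finset.card_pos.mp (by omega)
    obtain ⟨c₀, hc₀, hc₀max⟩ := (RightN σ t H v z).exists_max_image
      (fun w => (σ w : ℕ)) hne
    obtain ⟨hc₀t, hc₀adj, hc₀z, hc₀v⟩ := mem_RightN.mp hc₀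
    have hsub : (RightN σ t H v z).erase c₀ ⊆ Intv σ t z c₀ := by
      intro w hw
      obtain ⟨hwc, hw'⟩ := Finset.mem_erase.mp hw
      obtain ⟨hwt, hwadj, hwz, hwv⟩ := mem_RightN.mp hw'
      refine mem_Intv.mpr ⟨hwt, hwz, ?_⟩
      rcases lt_or_eq_of_le (hc₀max w hw') with h | h
      · exact h
      · exact absurd (pinj σ h) hwc
    have h1 := Finset.card_le_card hsub
    rw [Finset.card_erase_of_mem hc₀] at h1
    have h2 := hshort z c₀ hzt hc₀t hc₀adj hc₀z (by omega) hc₀v (Or.inl hz1)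
    omega
  -- positional bounds
  have hLl : ∀ z ∈ I, (LeftN σ t H u z).card ≤
      (I.filter fun w => (σ w : ℕ) < (σ z : ℕ)).card + 1 := by
    intro z hz
    have hsub : LeftN σ t H u z ⊆
        insert u (I.filter fun w => (σ w : ℕ) < (σ z : ℕ)) := by
      intro w hw
      obtain ⟨hwt, hwadj, hwu, hwz⟩ := mem_LeftN.mp hw
      obtain ⟨hzt, hz1, hz2⟩ := mem_Intv.mp hz
      by_cases h : w = u
      · simp [h]
      refine Finset.mem_insert_of_mem (Finset.mem_filter.mpr ⟨?_, hwz⟩)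
      refine mem_Intv.mpr ⟨hwt, ?_, by omega⟩
      rcases lt_or_eq_of_le hwu with h' | h'
      · exact h'
      · exact absurd (pinj σ h'.symm) h
    have h1 := Finset.card_le_card hsub
    have h2 := Finset.card_insert_le u (I.filter fun w => (σ w : ℕ) < (σ z : ℕ))
    omega
  have hRr : ∀ z ∈ I, (RightN σ t H v z).card ≤
      (I.filter fun w => (σ z : ℕ) < (σ w : ℕ)).card + 1 := by
    intro z hz
    have hsub : RightN σ t H v z ⊆
        insert v (I.filter fun w => (σ z : ℕ) < (σ w : ℕ)) := by
      intro w hw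
      obtain ⟨hwt, hwadj, hwz, hwv⟩ := mem_RightN.mp hw
      obtain ⟨hzt, hz1, hz2⟩ := mem_Intv.mp hz
      by_cases h : w = v
      · simp [h]
      refine Finset.mem_insert_of_mem (Finset.mem_filter.mpr ⟨?_, hwz⟩)
      refine mem_Intv.mpr ⟨hwt, by omega, ?_⟩
      rcases lt_or_eq_of_le hwv with h' | h'
      · exact h'
      · exact absurd (pinj σ h') h
    have h1 := Finset.card_le_card hsub
    have h2 := Finset.card_insert_le v (I.filter fun w => (σ z : ℕ) < (σ w : ℕ))
    omega
  -- the degree cover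
  have hcover : ∀ z ∈ I, δ ≤ (LeftN σ t H u z).card + (RightN σ t H v z).card
      + (OutN σ t H u v z).card := by
    intro z hz
    obtain ⟨hzt, hz1, hz2⟩ := mem_Intv.mp hz
    have hsub : t.filter (fun w => H.Adj z w) ⊆
        (LeftN σ t H u z ∪ RightN σ t H v z) ∪ OutN σ t H u v z := by
      intro w hw
      obtain ⟨hwt, hwadj⟩ := Finset.mem_filter.mp hw
      by_cases h1 : (σ w : ℕ) < (σ u : ℕ)
      · exact Finset.mem_union_right _ (mem_OutN.mpr ⟨hwt, hwadj, Or.inl h1⟩)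
      by_cases h2 : (σ v : ℕ) < (σ w : ℕ)
      · exact Finset.mem_union_right _ (mem_OutN.mpr ⟨hwt, hwadj, Or.inr h2⟩)
      apply Finset.mem_union_left
      have hwz : (σ w : ℕ) ≠ (σ z : ℕ) := by
        intro h
        have := pinj σ h
        rw [this] at hwadj
        exact H.irrefl hwadj
      by_cases h3 : (σ w : ℕ) < (σ z : ℕ)
      · exact Finset.mem_union_left _ (mem_LeftN.mpr ⟨hwt, hwadj, by omega, h3⟩)
      · exact Finset.mem_union_right _ (mem_RightN.mpr ⟨hwt, hwadj, by omega, by omega⟩)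
    have h1 := Finset.card_le_card hsub
    have h2 := Finset.card_union_le (LeftN σ t H u z ∪ RightN σ t H v z)
      (OutN σ t H u v z)
    have h3 := Finset.card_union_le (LeftN σ t H u z) (RightN σ t H v z)
    have h4 := hdeg z hzt
    omega
  -- image of positional index functions
  have hlinj : ∀ z₁ ∈ I, ∀ z₂ ∈ I, (σ z₁ : ℕ) < (σ z₂ : ℕ) →
      (I.filter fun w => (σ w : ℕ) < (σ z₁ : ℕ)).card
        < (I.filter fun w => (σ w : ℕ) < (σ z₂ : ℕ)).card := by
    intro z₁ h1 z₂ h2 hlt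
    apply Finset.card_lt_card
    rw [Finset.ssubset_iff_of_subset]
    · refine ⟨z₁, Finset.mem_filter.mpr ⟨h1, hlt⟩, ?_⟩
      intro hcon
      exact absurd (Finset.mem_filter.mp hcon).2 (lt_irrefl _)
    · intro w hw
      obtain ⟨hwI, hw'⟩ := Finset.mem_filter.mp hw
      exact Finset.mem_filter.mpr ⟨hwI, by omega⟩
  have hrinj : ∀ z₁ ∈ I, ∀ z₂ ∈ I, (σ z₁ : ℕ) < (σ z₂ : ℕ) →
      (I.filter fun w => (σ z₂ : ℕ) < (σ w : ℕ)).card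
        < (I.filter fun w => (σ z₁ : ℕ) < (σ w : ℕ)).card := by
    intro z₁ h1 z₂ h2 hlt
    apply Finset.card_lt_card
    rw [Finset.ssubset_iff_of_subset]
    · refine ⟨z₂, Finset.mem_filter.mpr ⟨h2, hlt⟩, ?_⟩
      intro hcon
      exact absurd (Finset.mem_filter.mp hcon).2 (lt_irrefl _)
    · intro w hw
      obtain ⟨hwI, hw'⟩ := Finset.mem_filter.mp hw
      exact Finset.mem_filter.mpr ⟨hwI, by omega⟩
  have hltrich : ∀ z₁ ∈ I, ∀ z₂ ∈ I, z₁ ≠ z₂ →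
      (σ z₁ : ℕ) < (σ z₂ : ℕ) ∨ (σ z₂ : ℕ) < (σ z₁ : ℕ) := by
    intro z₁ h1 z₂ h2 hne
    rcases lt_trichotomy ((σ z₁ : ℕ)) ((σ z₂ : ℕ)) with h | h | h
    · exact Or.inl h
    · exact absurd (pinj σ h) hne
    · exact Or.inr h
  have hlinjOn : ∀ z₁ ∈ I, ∀ z₂ ∈ I,
      (I.filter fun w => (σ w : ℕ) < (σ z₁ : ℕ)).card
        = (I.filter fun w => (σ w : ℕ) < (σ z₂ : ℕ)).card → z₁ = z₂ := by
    intro z₁ h1 z₂ h2 heq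
    by_contra hne
    rcases hltrich z₁ h1 z₂ h2 hne with h | h
    · have := hlinj z₁ h1 z₂ h2 h; omega
    · have := hlinj z₂ h2 z₁ h1 h; omega
  have hrinjOn : ∀ z₁ ∈ I, ∀ z₂ ∈ I,
      (I.filter fun w => (σ z₁ : ℕ) < (σ w : ℕ)).card
        = (I.filter fun w => (σ z₂ : ℕ) < (σ w : ℕ)).card → z₁ = z₂ := by
    intro z₁ h1 z₂ h2 heq
    by_contra hne
    rcases hltrich z₁ h1 z₂ h2 hne with h | h
    · have := hrinj z₁ h1 z₂ h2 h; omega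
    · have := hrinj z₂ h2 z₁ h1 h; omega
  have hlmem : ∀ z ∈ I, (I.filter fun w => (σ w : ℕ) < (σ z : ℕ)).card < Gx := by
    intro z hz
    have hsub : (I.filter fun w => (σ w : ℕ) < (σ z : ℕ)) ⊆ I.erase z := by
      intro w hw
      obtain ⟨hwI, hw'⟩ := Finset.mem_filter.mp hw
      refine Finset.mem_erase.mpr ⟨?_, hwI⟩
      intro hcon; rw [hcon] at hw'; omega
    have h1 := Finset.card_le_card hsub
    rw [Finset.card_erase_of_mem hz] at h1
    omega
  have hrmem : ∀ z ∈ I, (I.filter fun w => (σ z : ℕ) < (σ w : ℕ)).card < Gx := by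
    intro z hz
    have hsub : (I.filter fun w => (σ z : ℕ) < (σ w : ℕ)) ⊆ I.erase z := by
      intro w hw
      obtain ⟨hwI, hw'⟩ := Finset.mem_filter.mp hw
      refine Finset.mem_erase.mpr ⟨?_, hwI⟩
      intro hcon; rw [hcon] at hw'; omega
    have h1 := Finset.card_le_card hsub
    rw [Finset.card_erase_of_mem hz] at h1
    omega
  have himgL : I.image (fun z => (I.filter fun w => (σ w : ℕ) < (σ z : ℕ)).card)
      = Finset.range Gx := by
    apply Finset.eq_of_subset_of_card_le
    · intro j hj
      obtain ⟨z, hz, rfl⟩ := Finset.mem_image.mp hj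
      exact Finset.mem_range.mpr (hlmem z hz)
    · rw [Finset.card_range, Finset.card_image_of_injOn hlinjOn]
  have himgR : I.image (fun z => (I.filter fun w => (σ z : ℕ) < (σ w : ℕ)).card)
      = Finset.range Gx := by
    apply Finset.eq_of_subset_of_card_le
    · intro j hj
      obtain ⟨z, hz, rfl⟩ := Finset.mem_image.mp hj
      exact Finset.mem_range.mpr (hrmem z hz)
    · rw [Finset.card_range, Finset.card_image_of_injOn hrinjOn]
  -- sum evaluations
  have hevalL : ∑ z ∈ I, (q - 1 - (I.filter fun w => (σ w : ℕ) < (σ z : ℕ)).card)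
      = ∑ j ∈ Finset.range Gx, (q - 1 - j) := by
    rw [← himgL, Finset.sum_image hlinjOn]
  have hevalR : ∑ z ∈ I, (q - 1 - (I.filter fun w => (σ z : ℕ) < (σ w : ℕ)).card)
      = ∑ j ∈ Finset.range Gx, (q - 1 - j) := by
    rw [← himgR, Finset.sum_image hrinjOn]
  have hgauss : (q - 1) * q ≤ 2 * ∑ j ∈ Finset.range Gx, (q - 1 - j) := by
    have h1 : ∑ j ∈ Finset.range (q - 1), (q - 1 - j)
        ≤ ∑ j ∈ Finset.range Gx, (q - 1 - j) :=
      Finset.sum_le_sum_of_subset (Finset.range_subset_range.mpr (by omega))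
    have h2 := gauss_aux (q - 1)
    have h3 : (q - 1) * (q - 1 + 1) = (q - 1) * q := by
      congr 1
      omega
    omega
  -- assemble
  have hsumL : ∑ z ∈ I, ((LeftN σ t H u z).card
        + (q - 1 - (I.filter fun w => (σ w : ℕ) < (σ z : ℕ)).card))
      ≤ ∑ _z ∈ I, q := by
    refine Finset.sum_le_sum fun z hz => ?_
    have h1 := hLb z hz
    have h2 := hLl z hz
    omega
  have hsumR : ∑ z ∈ I, ((RightN σ t H v z).card
        + (q - 1 - (I.filter fun w => (σ z : ℕ) < (σ w : ℕ)).card))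
      ≤ ∑ _z ∈ I, q := by
    refine Finset.sum_le_sum fun z hz => ?_
    have h1 := hRb z hz
    have h2 := hRr z hz
    omega
  rw [Finset.sum_add_distrib, hevalL, Finset.sum_const, smul_eq_mul] at hsumL
  rw [Finset.sum_add_distrib, hevalR, Finset.sum_const, smul_eq_mul] at hsumR
  have hsumCover : ∑ _z ∈ I, δ ≤ ∑ z ∈ I, ((LeftN σ t H u z).card
      + ((RightN σ t H v z).card + (OutN σ t H u v z).card)) := by
    refine Finset.sum_le_sum fun z hz => ?_
    have := hcover z hz
    omega
  rw [Finset.sum_const, smul_eq_mul, Finset.sum_add_distrib] at hsumCover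
  rw [Finset.sum_add_distrib] at hsumCover
  have hout := sum_out_le k G H hH σ hσ t huvadj huvlt
  -- final arithmetic
  have hbig : Gx * δ + (q - 1) * q ≤ 2 * (Gx * q) + k := by
    have hS : ∑ z ∈ I, (OutN σ t H u v z).card ≤ k := hout
    linarith [hsumL, hsumR, hsumCover, hgauss, hS]
  have h2 : δ ≤ Gx + q := by omega
  zify [hq3, (by omega : q ≤ δ - 1), (by omega : 1 ≤ δ)] at hbig hq1
  have hq2' : (2 * q + 1 : ℤ) ≤ (δ : ℤ) := by exact_mod_cast hq2
  have h2' : (δ : ℤ) ≤ (Gx : ℤ) + q := by exact_mod_cast h2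
  nlinarith [mul_nonneg (by linarith : (0:ℤ) ≤ (Gx : ℤ) + q - δ)
      (by linarith : (0:ℤ) ≤ (δ : ℤ) - 2 * q - 1),
    sq_nonneg ((δ : ℤ) - 2 * (q : ℤ))]


end Aux

/-- Outer `k`-planar graphs are `(⌊√(4k+1)⌋+1)`-degenerate: every (nonempty)
subgraph contains a vertex of degree at most `⌊√(4k+1)⌋ + 1`. -/
theorem stmt5 (k : ℕ) {V : Type*} [Fintype V] [DecidableEq V]
    (G : SimpleGraph V) (h : IsOuterKPlanar k G)
    (t : Finset V) (ht : t.Nonempty) (H : SimpleGraph V) (hH : H ≤ G) :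
    ∃ v ∈ t, (t.filter (fun u => H.Adj v u)).card ≤ Nat.sqrt (4 * k + 1) + 1 := by
  by_contra hcon
  push_neg at hcon
  obtain ⟨σ, hσ⟩ := h
  refine core_false k G H hH σ hσ t ht fun v hv => ?_
  have := hcon v hv
  omega
end

section
/- Every graph admitting an outer k-planar drawing has chromatic number at most ⌊√(4k+1)⌋ + 2, and this bound is tight: the complete graph on ⌊√(4k+1)⌋ + 2 vertices is outer k-planar. -/
open Finset

open scoped Classical

namespace OKP

variable {n : ℕ}

lemma val_min (a b : Fin n) : (min a b).val = min a.val b.val := by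
  rcases le_total a b with h | h
  · rw [min_eq_left h, min_eq_left (Fin.le_def.mp h)]
  · rw [min_eq_right h, min_eq_right (Fin.le_def.mp h)]

lemma val_max (a b : Fin n) : (max a b).val = max a.val b.val := by
  rcases le_total a b with h | h
  · rw [max_eq_right h, max_eq_right (Fin.le_def.mp h)]
  · rw [max_eq_left h, max_eq_left (Fin.le_def.mp h)]

lemma interleave_val {a b c d : Fin n} : Interleave a b c d ↔
    ((min a.val b.val < min c.val d.val ∧ min c.val d.val < max a.val b.val ∧
      max a.val b.val < max c.val d.val) ∨
     (min c.val d.val < min a.val b.val ∧ min a.val b.val < max c.val d.val ∧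
      max c.val d.val < max a.val b.val)) := by
  unfold Interleave
  rw [Fin.lt_def, Fin.lt_def, Fin.lt_def, Fin.lt_def, Fin.lt_def, Fin.lt_def,
    val_min, val_min, val_max, val_max]

lemma interleave_swap_left {a b c d : Fin n} (h : Interleave a b c d) : Interleave b a c d := by
  rw [interleave_val] at h ⊢
  omega

lemma interleave_swap_right {a b c d : Fin n} (h : Interleave a b c d) : Interleave a b d c := by
  rw [interleave_val] at h ⊢
  omega

lemma sym2cross_pair {a b c d : Fin n} : Sym2Cross s(a,b) s(c,d) ↔ Interleave a b c d := by
  constructor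
  · rintro ⟨a', b', c', d', h1, h2, h3⟩
    rw [Sym2.eq_iff] at h1 h2
    rcases h1 with ⟨rfl, rfl⟩ | ⟨rfl, rfl⟩ <;> rcases h2 with ⟨rfl, rfl⟩ | ⟨rfl, rfl⟩
    · exact h3
    · exact interleave_swap_right h3
    · exact interleave_swap_left h3
    · exact interleave_swap_left (interleave_swap_right h3)
  · exact fun h => ⟨a, b, c, d, rfl, rfl, h⟩

lemma interleave_map {N : ℕ} {φ : Fin n → Fin N} (hφ : StrictMono φ) {a b c d : Fin n} :
    Interleave (φ a) (φ b) (φ c) (φ d) ↔ Interleave a b c d := by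
  have hmin : ∀ x y : Fin n, min (φ x) (φ y) = φ (min x y) := fun x y =>
    (hφ.monotone.map_min).symm
  have hmax : ∀ x y : Fin n, max (φ x) (φ y) = φ (max x y) := fun x y =>
    (hφ.monotone.map_max).symm
  simp only [Interleave, hmin, hmax, hφ.lt_iff_lt]

lemma sym2cross_map {N : ℕ} {φ : Fin n → Fin N} (hφ : StrictMono φ) (e f : Sym2 (Fin n)) :
    Sym2Cross (e.map φ) (f.map φ) ↔ Sym2Cross e f := by
  induction e using Sym2.ind with | _ a b =>
  induction f using Sym2.ind with | _ c d =>
  rw [Sym2.map_pair_eq, Sym2.map_pair_eq, sym2cross_pair, sym2cross_pair, interleave_map hφ]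

/-! ### cyclic gaps -/

def gapUp (a b : Fin n) : ℕ := (b.val + n - a.val) % n

lemma gapUp_eq (a b : Fin n) :
    gapUp a b = if a.val ≤ b.val then b.val - a.val else b.val + n - a.val := by
  have ha := a.isLt
  have hb := b.isLt
  unfold gapUp
  split
  · have h1 : b.val + n - a.val = n + (b.val - a.val) := by omega
    rw [h1, Nat.add_mod_left, Nat.mod_eq_of_lt (by omega)]
  · rw [Nat.mod_eq_of_lt (by omega)]

lemma gapUp_lt (a b : Fin n) : gapUp a b < n := Nat.mod_lt _ a.pos

lemma gapUp_eq_zero_iff (a b : Fin n) : gapUp a b = 0 ↔ a = b := by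
  have ha := a.isLt
  have hb := b.isLt
  rw [gapUp_eq, Fin.ext_iff]
  split <;> omega

lemma gapUp_add_gapUp {a b : Fin n} (h : a ≠ b) : gapUp a b + gapUp b a = n := by
  have ha := a.isLt
  have hb := b.isLt
  have hne : a.val ≠ b.val := fun hh => h (Fin.ext hh)
  rw [gapUp_eq, gapUp_eq]
  split <;> split <;> omega

def av (a : Fin n) (j : ℕ) : Fin n := ⟨(a.val + j) % n, Nat.mod_lt _ a.pos⟩

lemma av_val (a : Fin n) {j : ℕ} (hj : j < n) :
    (av a j).val = if a.val + j < n then a.val + j else a.val + j - n := by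
  have ha := a.isLt
  show (a.val + j) % n = _
  split
  · exact Nat.mod_eq_of_lt ‹_›
  · rw [Nat.mod_eq_sub_mod (by omega), Nat.mod_eq_of_lt (by omega)]

lemma gapUp_av (a : Fin n) {j : ℕ} (hj : j < n) : gapUp a (av a j) = j := by
  have ha := a.isLt
  rw [gapUp_eq, av_val a hj]
  split_ifs <;> omega

lemma av_gapUp (a z : Fin n) : av a (gapUp a z) = z := by
  have ha := a.isLt
  have hz := z.isLt
  apply Fin.ext
  rw [av_val a (gapUp_lt a z), gapUp_eq]
  split_ifs <;> omega

lemma gapUp_inj (a : Fin n) {z1 z2 : Fin n} (h : gapUp a z1 = gapUp a z2) : z1 = z2 := by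
  rw [← av_gapUp a z1, ← av_gapUp a z2, h]

lemma gapUp_av_av (a : Fin n) {x y : ℕ} (hx : x < n) (hy : y < n) :
    gapUp (av a x) (av a y) = if x ≤ y then y - x else y + n - x := by
  have ha := a.isLt
  rw [gapUp_eq, av_val a hx, av_val a hy]
  split_ifs <;> omega

/-! ### crossing characterizations -/

lemma cross_of_arc {a b c d : Fin n} (h1 : 0 < gapUp a c) (h2 : gapUp a c < gapUp a b)
    (h3 : gapUp a b < gapUp a d) : Sym2Cross s(a,b) s(c,d) := by
  rw [sym2cross_pair, interleave_val]
  have ha := a.isLt; have hb := b.isLt; have hc := c.isLt; have hd := d.isLt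
  rw [gapUp_eq] at h1 h2 h3
  rw [gapUp_eq] at h2 h3
  split_ifs at h1 h2 h3 <;> omega

lemma arc_of_cross {a b c d : Fin n} (h : Sym2Cross s(a,b) s(c,d)) :
    (0 < gapUp a c ∧ gapUp a c < gapUp a b ∧ gapUp a b < gapUp a d) ∨
    (0 < gapUp a d ∧ gapUp a d < gapUp a b ∧ gapUp a b < gapUp a c) := by
  rw [sym2cross_pair, interleave_val] at h
  have ha := a.isLt; have hb := b.isLt; have hc := c.isLt; have hd := d.isLt
  rw [gapUp_eq, gapUp_eq, gapUp_eq]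
  split_ifs <;> omega


/-! ### sum lemmas -/

lemma twice_sum_min_of_le {m : ℕ} : ∀ {i : ℕ}, i ≤ m →
    2 * (∑ j ∈ Finset.Icc 1 i, min j m) = i * (i+1) := by
  intro i
  induction i with
  | zero => simp
  | succ i ihh =>
    intro hi
    rw [Finset.sum_Icc_succ_top (by omega), Nat.mul_add, ihh (by omega),
      min_eq_left (by omega)]
    ring

lemma twice_sum_min {m : ℕ} : ∀ {i : ℕ}, m ≤ i →
    2 * (∑ j ∈ Finset.Icc 1 i, min j m) + m * m = 2 * i * m + m := by
  intro i hi
  induction i, hi using Nat.le_induction with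
  | base =>
    rw [twice_sum_min_of_le le_rfl]
    ring
  | succ i hi ih =>
    rw [Finset.sum_Icc_succ_top (by omega), min_eq_right (by omega), Nat.mul_add] at *
    ring_nf at ih ⊢
    linarith

lemma sum_reflect (g m : ℕ) :
    ∑ j ∈ Finset.Icc 1 (g-1), min (g - j) m = ∑ j ∈ Finset.Icc 1 (g-1), min j m := by
  apply Finset.sum_nbij' (i := fun j => g - j) (j := fun j => g - j)
  · intro a ha; rw [Finset.mem_Icc] at *; omega
  · intro a ha; rw [Finset.mem_Icc] at *; omega
  · intro a ha; rw [Finset.mem_Icc] at ha; omega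
  · intro a ha; rw [Finset.mem_Icc] at ha; omega
  · intro a _
    rfl

/-! ### the main counting argument -/

lemma main_count {k s m : ℕ} {n : ℕ} (G : SimpleGraph (Fin n))
    (HC : ∀ e ∈ G.edgeFinset,
      (G.edgeFinset.filter (fun f => f ≠ e ∧ Sym2Cross e f)).card ≤ k)
    (hdeg : ∀ v, s + 2 ≤ G.degree v)
    (h2m : 2*m ≤ s+1) (hm1 : 1 ≤ m) (hkm : k + 1 ≤ m * (s+1-m))
    {a b : Fin n} (hab : G.Adj a b) (hg : m + 1 ≤ gapUp a b) (hgle : gapUp a b ≤ gapUp b a)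
    (hmin : ∀ c d : Fin n, G.Adj c d → m + 1 ≤ min (gapUp c d) (gapUp d c) →
      gapUp a b ≤ min (gapUp c d) (gapUp d c)) : False := by
  classical
  set g := gapUp a b with hgdef
  have hane : a ≠ b := hab.ne
  have hgn : g + gapUp b a = n := gapUp_add_gapUp hane
  have h2g : 2 * g ≤ n := by omega
  have hgltn : g < n := gapUp_lt a b
  have hfE : s(a,b) ∈ G.edgeFinset := by
    rw [SimpleGraph.mem_edgeFinset, SimpleGraph.mem_edgeSet]; exact hab
  have hXk := HC _ hfE
  set X := G.edgeFinset.filter (fun f => f ≠ s(a,b) ∧ Sym2Cross s(a,b) f) with hX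
  have claimA : ∀ j ∈ Finset.Icc 1 (g-1),
      s + 2 ≤ (X.filter (fun e => av a j ∈ e)).card + (min j m + min (g - j) m) := by
    intro j hj
    rw [Finset.mem_Icc] at hj
    have hjn : j < n := by omega
    have hwj : gapUp a (av a j) = j := gapUp_av a hjn
    have hsplit := Finset.card_filter_add_card_filter_not
      (s := G.neighborFinset (av a j)) (p := fun z => gapUp a z ≤ g)
    have hOUT : ((G.neighborFinset (av a j)).filter (fun z => ¬ gapUp a z ≤ g)).card
        ≤ (X.filter (fun e => av a j ∈ e)).card := by
      apply Finset.card_le_card_of_injOn (fun z => s(av a j, z))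
      · intro z hz
        simp only [Finset.mem_coe, Finset.mem_filter, SimpleGraph.mem_neighborFinset] at hz
        obtain ⟨hadjz, hzout⟩ := hz
        push_neg at hzout
        have hne : s(av a j, z) ≠ s(a, b) := by
          intro heq
          have hmem : av a j ∈ s(a,b) := heq ▸ Sym2.mem_mk_left _ _
          rw [Sym2.mem_iff] at hmem
          rcases hmem with h' | h'
          · rw [h'] at hwj
            have h0 := (gapUp_eq_zero_iff a a).mpr rfl
            omega
          · rw [h'] at hwj
            omega
        refine Finset.mem_filter.mpr ⟨Finset.mem_filter.mpr ⟨?_, hne, ?_⟩, ?_⟩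
        · rw [SimpleGraph.mem_edgeFinset, SimpleGraph.mem_edgeSet]; exact hadjz
        · exact cross_of_arc (by omega) (by omega) (by omega)
        · exact Sym2.mem_mk_left _ _
      · intro z1 _ z2 _ heq
        exact Sym2.congr_right.mp heq
    have hIN : ((G.neighborFinset (av a j)).filter (fun z => gapUp a z ≤ g)).card
        ≤ min j m + min (g - j) m := by
      have hcard : ((G.neighborFinset (av a j)).filter (fun z => gapUp a z ≤ g)).card
          ≤ (Finset.Icc (j - m) (j-1) ∪ Finset.Icc (j+1) (min (j+m) g)).card := by
        apply Finset.card_le_card_of_injOn (fun z => gapUp a z)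
        · intro z hz
          dsimp only
          simp only [Finset.mem_coe, Finset.mem_filter, SimpleGraph.mem_neighborFinset] at hz
          obtain ⟨hadjz, hpg⟩ := hz
          have hzav : av a (gapUp a z) = z := av_gapUp a z
          have hpn : gapUp a z < n := gapUp_lt a z
          have hzw : z ≠ av a j := hadjz.ne'
          have hpj : gapUp a z ≠ j := by
            intro h'
            exact hzw (by rw [← hzav, h'])
          rcases lt_or_gt_of_ne hpj with hlt | hgt
          · have h1 : gapUp z (av a j) = j - gapUp a z := by
              conv_lhs => rw [← hzav]
              rw [gapUp_av_av a hpn hjn, if_pos (by omega)]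
            have h2 : gapUp (av a j) z = n - (j - gapUp a z) := by
              have := gapUp_add_gapUp (a := z) (b := av a j) hzw
              omega
            have hminz : min (gapUp (av a j) z) (gapUp z (av a j)) = j - gapUp a z := by
              rw [h1, h2, min_eq_right (by omega)]
            have hjp : j - gapUp a z ≤ m := by
              by_contra hcon
              have hlow := hmin (av a j) z hadjz (by rw [hminz]; omega)
              rw [hminz] at hlow
              omega
            exact Finset.mem_union_left _ (Finset.mem_Icc.mpr ⟨by omega, by omega⟩)
          · have h1 : gapUp (av a j) z = gapUp a z - j := by
              conv_lhs => rw [← hzav]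
              rw [gapUp_av_av a hjn hpn, if_pos (by omega)]
            have h2 : gapUp z (av a j) = n - (gapUp a z - j) := by
              have := gapUp_add_gapUp (a := av a j) (b := z) hzw.symm
              omega
            have hminz : min (gapUp (av a j) z) (gapUp z (av a j)) = gapUp a z - j := by
              rw [h1, h2, min_eq_left (by omega)]
            have hjp : gapUp a z - j ≤ m := by
              by_contra hcon
              have hlow := hmin (av a j) z hadjz (by rw [hminz]; omega)
              rw [hminz] at hlow
              omega
            exact Finset.mem_union_right _ (Finset.mem_Icc.mpr ⟨by omega, by omega⟩)
        · intro z1 _ z2 _ heq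
          exact gapUp_inj a heq
      have hu := Finset.card_union_le (Finset.Icc (j - m) (j-1)) (Finset.Icc (j+1) (min (j+m) g))
      rw [Nat.card_Icc, Nat.card_Icc] at hu
      omega
    have hdegj := hdeg (av a j)
    have hdegeq : G.degree (av a j) = (G.neighborFinset (av a j)).card := rfl
    omega
  have hdisj : ∀ j1 ∈ Finset.Icc 1 (g-1), ∀ j2 ∈ Finset.Icc 1 (g-1), j1 ≠ j2 →
      Disjoint (X.filter (fun e => av a j1 ∈ e)) (X.filter (fun e => av a j2 ∈ e)) := by
    intro j1 hj1 j2 hj2 hne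
    rw [Finset.mem_Icc] at hj1 hj2
    rw [Finset.disjoint_left]
    intro e he1 he2
    simp only [Finset.mem_filter] at he1 he2
    have hw1 : gapUp a (av a j1) = j1 := gapUp_av a (by omega)
    have hw2 : gapUp a (av a j2) = j2 := gapUp_av a (by omega)
    have hwne : av a j1 ≠ av a j2 := fun h => hne (by rw [← hw1, ← hw2, h])
    have heq : e = s(av a j1, av a j2) := (Sym2.mem_and_mem_iff hwne).mp ⟨he1.2, he2.2⟩
    have hcross : Sym2Cross s(a,b) e := (Finset.mem_filter.mp he1.1).2.2
    rw [heq] at hcross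
    rcases arc_of_cross hcross with ⟨_, _, h3⟩ | ⟨_, _, h3⟩
    · rw [hw2] at h3; omega
    · rw [hw1] at h3; omega
  have hsum_le : ∑ j ∈ Finset.Icc 1 (g-1), (X.filter (fun e => av a j ∈ e)).card ≤ k := by
    rw [← Finset.card_biUnion hdisj]
    refine le_trans (Finset.card_le_card ?_) hXk
    exact Finset.biUnion_subset.mpr (fun j _ => Finset.filter_subset _ _)
  have hsum_ge : (g-1) * (s+2) ≤
      (∑ j ∈ Finset.Icc 1 (g-1), (X.filter (fun e => av a j ∈ e)).card)
      + ((∑ j ∈ Finset.Icc 1 (g-1), min j m) + (∑ j ∈ Finset.Icc 1 (g-1), min (g-j) m)) := by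
    have h1 : (g-1) * (s+2) = ∑ _j ∈ Finset.Icc 1 (g-1), (s+2) := by
      rw [Finset.sum_const, Nat.card_Icc, smul_eq_mul]
      congr 1
    rw [h1, ← Finset.sum_add_distrib, ← Finset.sum_add_distrib]
    exact Finset.sum_le_sum claimA
  rw [sum_reflect] at hsum_ge
  have him : m ≤ g - 1 := by omega
  have h2S := twice_sum_min (m := m) him
  set SM := ∑ j ∈ Finset.Icc 1 (g-1), min j m with hSM
  set CC := ∑ j ∈ Finset.Icc 1 (g-1), (X.filter (fun e => av a j ∈ e)).card with hCC
  set i := g - 1 with hi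
  set D := s + 2 - 2*m with hDdef
  have hD1 : 1 ≤ D := by omega
  have hs2 : s + 2 = 2*m + D := by omega
  have e1 : i*(s+2) = 2*i*m + i*D := by rw [hs2]; ring
  have hM : (s+1-m) + 1 = m + D := by omega
  have e2 : m * ((s+1-m) + 1) = m*m + m*D := by rw [hM]; ring
  have e2' : m * ((s+1-m) + 1) = m * (s+1-m) + m := by ring
  have e3 : m*D ≤ i*D := Nat.mul_le_mul_right D him
  -- hsum_ge : i*(s+2) ≤ CC + (SM + SM); h2S : 2*SM + m*m = 2*i*m + m; hsum_le : CC ≤ k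
  linarith

lemma exists_low_degree {k n : ℕ} (G : SimpleGraph (Fin n))
    (HC : ∀ e ∈ G.edgeFinset,
      (G.edgeFinset.filter (fun f => f ≠ e ∧ Sym2Cross e f)).card ≤ k)
    (hn : 0 < n) : ∃ v, G.degree v ≤ Nat.sqrt (4*k+1) + 1 := by
  by_contra hcon
  push_neg at hcon
  set s := Nat.sqrt (4*k+1) with hs
  have hdeg : ∀ v, s + 2 ≤ G.degree v := fun v => hcon v
  set m := (s+1)/2 with hm
  have hs1 : 1 ≤ s := by
    rw [hs]
    exact Nat.le_sqrt.mpr (by omega)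
  have hm1 : 1 ≤ m := by omega
  have h2m : 2*m ≤ s + 1 := by omega
  have hkm : k + 1 ≤ m * (s+1-m) := by
    have hlt : 4*k+1 < (s+1)*(s+1) := by rw [hs]; exact Nat.lt_succ_sqrt _
    rcases (by omega : s + 1 = 2*m ∨ s+1 = 2*m+1) with h | h
    · have hMm : s+1-m = m := by omega
      have h4 : (s+1)*(s+1) = 4*(m*(s+1-m)) := by rw [hMm, h]; ring
      omega
    · have hMm : s+1-m = m+1 := by omega
      have h4 : (s+1)*(s+1) = 4*(m*(s+1-m)) + 1 := by rw [hMm, h]; ring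
      omega
  have hv0 : ∃ (u v : Fin n), G.Adj u v ∧ m + 1 ≤ min (gapUp u v) (gapUp v u) := by
    set v0 : Fin n := ⟨0, hn⟩ with hv0def
    by_contra hno
    push_neg at hno
    have hsub : G.neighborFinset v0 ⊆
        (Finset.Icc 1 m).image (fun j => av v0 j) ∪
        (Finset.Icc 1 m).image (fun j => av v0 (n - j)) := by
      intro u hu
      rw [SimpleGraph.mem_neighborFinset] at hu
      have hne : v0 ≠ u := hu.ne
      have hgap := hno v0 u hu
      have hsum := gapUp_add_gapUp hne
      have h1 : gapUp v0 u ≠ 0 := fun h0 => hne ((gapUp_eq_zero_iff v0 u).mp h0)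
      have hlt := gapUp_lt v0 u
      rcases le_or_gt (gapUp v0 u) m with hc | hc
      · exact Finset.mem_union_left _ (Finset.mem_image.mpr
          ⟨gapUp v0 u, Finset.mem_Icc.mpr ⟨by omega, hc⟩, av_gapUp v0 u⟩)
      · have hc2 : n - gapUp v0 u ≤ m := by omega
        refine Finset.mem_union_right _ (Finset.mem_image.mpr
          ⟨n - gapUp v0 u, Finset.mem_Icc.mpr ⟨by omega, hc2⟩, ?_⟩)
        rw [show n - (n - gapUp v0 u) = gapUp v0 u by omega, av_gapUp]
    have hcard := Finset.card_le_card hsub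
    have hdle : G.degree v0 ≤ 2*m := by
      have hu := Finset.card_union_le ((Finset.Icc 1 m).image (fun j => av v0 j))
        ((Finset.Icc 1 m).image (fun j => av v0 (n - j)))
      have hi1 := Finset.card_image_le (s := Finset.Icc 1 m) (f := fun j => av v0 j)
      have hi2 := Finset.card_image_le (s := Finset.Icc 1 m) (f := fun j => av v0 (n - j))
      rw [Nat.card_Icc] at hi1 hi2
      have hdegeq : G.degree v0 = (G.neighborFinset v0).card := rfl
      omega
    have := hdeg v0
    omega
  obtain ⟨u0, w0, hadj0, hlong0⟩ := hv0
  set P := Finset.univ.filter (fun p : Fin n × Fin n =>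
    G.Adj p.1 p.2 ∧ m + 1 ≤ min (gapUp p.1 p.2) (gapUp p.2 p.1)) with hP
  have hPne : P.Nonempty := ⟨(u0, w0), by simp only [hP, Finset.mem_filter, Finset.mem_univ, true_and]; exact ⟨hadj0, hlong0⟩⟩
  obtain ⟨p0, hp0P, hp0min⟩ := Finset.exists_min_image P
    (fun p => min (gapUp p.1 p.2) (gapUp p.2 p.1)) hPne
  simp only [hP, Finset.mem_filter, Finset.mem_univ, true_and] at hp0P
  obtain ⟨hadj, hlong⟩ := hp0P
  have hminP : ∀ c d : Fin n, G.Adj c d → m+1 ≤ min (gapUp c d) (gapUp d c) →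
      min (gapUp p0.1 p0.2) (gapUp p0.2 p0.1) ≤ min (gapUp c d) (gapUp d c) := by
    intro c d h1 h2
    exact hp0min (c,d) (by simp only [hP, Finset.mem_filter, Finset.mem_univ, true_and]; exact ⟨h1, h2⟩)
  rcases le_total (gapUp p0.1 p0.2) (gapUp p0.2 p0.1) with hle | hle
  · refine main_count G HC hdeg h2m hm1 hkm hadj ?_ hle ?_
    · rw [← min_eq_left hle]; exact hlong
    · intro c d h1 h2
      have := hminP c d h1 h2
      rwa [min_eq_left hle] at this
  · refine main_count G HC hdeg h2m hm1 hkm hadj.symm ?_ hle ?_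
    · rw [← min_eq_right hle]; exact hlong
    · intro c d h1 h2
      have := hminP c d h1 h2
      rwa [min_eq_right hle] at this

lemma colorable_of_cross (k : ℕ) : ∀ (n : ℕ) (G : SimpleGraph (Fin n)),
    (∀ e ∈ G.edgeFinset,
      (G.edgeFinset.filter (fun f => f ≠ e ∧ Sym2Cross e f)).card ≤ k) →
    G.Colorable (Nat.sqrt (4*k+1) + 2) := by
  intro n
  induction n using Nat.strong_induction_on with
  | _ n ih =>
    match n, ih with
    | 0, _ =>
      intro G _
      exact ⟨G.coloringOfIsEmpty⟩
    | (n' + 1), ih =>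
      intro G HC
      obtain ⟨v, hv⟩ := exists_low_degree G HC (Nat.succ_pos n')
      set ι := v.succAbove with hι
      have hmono : StrictMono ι := Fin.strictMono_succAbove v
      set G' : SimpleGraph (Fin n') := G.comap ι with hG'
      have hmap_edge : ∀ f' : Sym2 (Fin n'), f' ∈ G'.edgeFinset → f'.map ι ∈ G.edgeFinset := by
        intro f'
        induction f' using Sym2.ind with | _ x y =>
        rw [Sym2.map_pair_eq, SimpleGraph.mem_edgeFinset, SimpleGraph.mem_edgeFinset,
          SimpleGraph.mem_edgeSet, SimpleGraph.mem_edgeSet]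
        exact fun h => h
      have HC' : ∀ e ∈ G'.edgeFinset,
          (G'.edgeFinset.filter (fun f => f ≠ e ∧ Sym2Cross e f)).card ≤ k := by
        intro e he
        have hle : (G'.edgeFinset.filter (fun f => f ≠ e ∧ Sym2Cross e f)).card ≤
            (G.edgeFinset.filter (fun f => f ≠ e.map ι ∧ Sym2Cross (e.map ι) f)).card := by
          apply Finset.card_le_card_of_injOn (fun f => f.map ι)
          · intro f hf
            simp only [Finset.mem_coe, Finset.mem_filter] at hf ⊢
            exact ⟨hmap_edge f hf.1,
              fun hh => hf.2.1 (Sym2.map.injective hmono.injective hh),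
              (sym2cross_map hmono e f).mpr hf.2.2⟩
          · intro f1 _ f2 _ hf
            exact Sym2.map.injective hmono.injective hf
        exact hle.trans (HC _ (hmap_edge e he))
      obtain ⟨c'⟩ := ih n' (Nat.lt_succ_self _) G' HC'
      set col0 : Fin (Nat.sqrt (4*k+1) + 2) := ⟨0, by omega⟩ with hcol0
      set cfun : Fin (n'+1) → Fin (Nat.sqrt (4*k+1) + 2) :=
        fun x => if h : ∃ y, v.succAbove y = x then c' h.choose else col0 with hcfun
      set used : Finset (Fin (Nat.sqrt (4*k+1) + 2)) :=
        (G.neighborFinset v).image cfun with hused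
      have husedcard : used.card < Nat.sqrt (4*k+1) + 2 := by
        have h1 := Finset.card_image_le (s := G.neighborFinset v) (f := cfun)
        have h2 : (G.neighborFinset v).card = G.degree v := rfl
        rw [hused]
        omega
      have hfree : (usedᶜ : Finset (Fin (Nat.sqrt (4*k+1) + 2))).Nonempty := by
        rw [← Finset.card_pos, Finset.card_compl]
        have := Fintype.card_fin (Nat.sqrt (4*k+1) + 2)
        omega
      obtain ⟨col, hcolmem⟩ := hfree
      rw [Finset.mem_compl] at hcolmem
      refine ⟨SimpleGraph.Coloring.mk
        (fun x => if h : ∃ y, v.succAbove y = x then c' h.choose else col) ?_⟩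
      intro x y hadj
      have hxy : x ≠ y := hadj.ne
      by_cases hx : ∃ yy, v.succAbove yy = x <;> by_cases hy : ∃ yy, v.succAbove yy = y
      · simp only [dif_pos hx, dif_pos hy]
        apply c'.valid
        show G.Adj (ι hx.choose) (ι hy.choose)
        rw [hι, hx.choose_spec, hy.choose_spec]
        exact hadj
      · have hyv : y = v := by
          by_contra hyv
          exact hy (Fin.exists_succAbove_eq (by exact fun hh => hyv hh))
        simp only [dif_pos hx, dif_neg hy]
        intro heq
        apply hcolmem
        rw [hused]
        apply Finset.mem_image.mpr
        refine ⟨x, ?_, ?_⟩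
        · rw [SimpleGraph.mem_neighborFinset, ← hyv]
          exact hadj.symm
        · rw [hcfun]
          simp only [dif_pos hx]
          exact heq
      · have hxv : x = v := by
          by_contra hxv
          exact hx (Fin.exists_succAbove_eq (by exact fun hh => hxv hh))
        simp only [dif_neg hx, dif_pos hy]
        intro heq
        apply hcolmem
        rw [hused]
        apply Finset.mem_image.mpr
        refine ⟨y, ?_, ?_⟩
        · rw [SimpleGraph.mem_neighborFinset, ← hxv]
          exact hadj
        · rw [hcfun]
          simp only [dif_pos hy]
          exact heq.symm
      · exfalso
        apply hxy
        have hxv : x = v := by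
          by_contra hxv
          exact hx (Fin.exists_succAbove_eq (by exact fun hh => hxv hh))
        have hyv : y = v := by
          by_contra hyv
          exact hy (Fin.exists_succAbove_eq (by exact fun hh => hyv hh))
        rw [hxv, hyv]

lemma pair_min_max {α : Type*} [LinearOrder α] (c d : α) : s(min c d, max c d) = s(c, d) := by
  rcases le_total c d with h | h
  · rw [min_eq_left h, max_eq_right h]
  · rw [min_eq_right h, max_eq_left h, Sym2.eq_swap]

lemma top_count' {k N : ℕ} (hN : N = Nat.sqrt (4*k+1) + 2) (a b : Fin N) (hab : a < b)
    (X : Finset (Sym2 (Fin N))) (hX : ∀ f ∈ X, Sym2Cross s(a,b) f) : X.card ≤ k := by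
  classical
  set s := Nat.sqrt (4*k+1) with hs
  have hex : ∀ f ∈ X,
      ∃ p : Fin N × Fin N, f = s(p.1, p.2) ∧ (a < p.1 ∧ p.1 < b) ∧ (p.2 < a ∨ b < p.2) := by
    intro f hf
    obtain ⟨a', b', c, d, hpair, hfeq, hint⟩ := hX f hf
    have hint2 : Interleave a b c d := sym2cross_pair.mp ⟨a', b', c, d, hpair, rfl, hint⟩
    rcases hint2 with ⟨h1', h2', h3'⟩ | ⟨h1', h2', h3'⟩
    · rw [min_eq_left hab.le] at h1'
      rw [max_eq_right hab.le] at h2' h3'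
      exact ⟨(min c d, max c d), by rw [hfeq, pair_min_max], ⟨h1', h2'⟩, Or.inr h3'⟩
    · rw [min_eq_left hab.le] at h1' h2'
      rw [max_eq_right hab.le] at h3'
      refine ⟨(max c d, min c d), ?_, ⟨h2', h3'⟩, Or.inl h1'⟩
      rw [hfeq]
      exact ((pair_min_max c d).symm).trans Sym2.eq_swap
  have hcard : X.card ≤ ((Finset.Ioo a b) ×ˢ ((Finset.Iio a) ∪ (Finset.Ioi b))).card := by
    apply Finset.card_le_card_of_injOn (fun f =>
      if h : ∃ p : Fin N × Fin N, f = s(p.1, p.2) ∧ (a < p.1 ∧ p.1 < b) ∧ (p.2 < a ∨ b < p.2)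
      then h.choose else (a,a))
    · intro f hf
      dsimp only
      rw [Finset.mem_coe, dif_pos (hex f hf)]
      have hspec := (hex f hf).choose_spec
      rw [Finset.mem_product]
      refine ⟨Finset.mem_Ioo.mpr hspec.2.1, ?_⟩
      rcases hspec.2.2 with h | h
      · exact Finset.mem_union_left _ (Finset.mem_Iio.mpr h)
      · exact Finset.mem_union_right _ (Finset.mem_Ioi.mpr h)
    · intro f1 hf1 f2 hf2 heq
      dsimp only at heq
      rw [dif_pos (hex f1 hf1), dif_pos (hex f2 hf2)] at heq
      rw [(hex f1 hf1).choose_spec.1, (hex f2 hf2).choose_spec.1, heq]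
  have hdisj : Disjoint (Finset.Iio a) (Finset.Ioi b) := by
    rw [Finset.disjoint_left]
    intro x hx hx'
    rw [Finset.mem_Iio] at hx
    rw [Finset.mem_Ioi] at hx'
    exact absurd (hx.trans (hab.trans hx')) (lt_irrefl x)
  rw [Finset.card_product, Finset.card_union_of_disjoint hdisj, Fin.card_Ioo, Fin.card_Iio,
    Fin.card_Ioi] at hcard
  refine hcard.trans ?_
  have hs2 : s * s ≤ 4*k+1 := by rw [hs]; exact Nat.sqrt_le _
  set X' := b.val - a.val - 1 with hX'
  set Y := a.val + (N - 1 - b.val) with hY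
  have hab' : a.val < b.val := hab
  have hbN := b.isLt
  have hXY : X' + Y = s := by omega
  have h4 : (4:ℤ) * ((X':ℤ) * (Y:ℤ)) ≤ ((X':ℤ) + Y) * ((X':ℤ) + Y) := by
    nlinarith [sq_nonneg ((X':ℤ) - Y)]
  have h4' : 4 * (X' * Y) ≤ (X' + Y) * (X' + Y) := by exact_mod_cast h4
  rw [hXY] at h4'
  omega

end OKP

/-- Every outer `k`-planar graph has chromatic number at most `⌊√(4k+1)⌋ + 2`,
and this bound is tight: the complete graph on `⌊√(4k+1)⌋ + 2` vertices is
outer `k`-planar. -/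
theorem stmt6 (k : ℕ) :
    (∀ (V : Type) [Fintype V] [DecidableEq V] (G : SimpleGraph V),
      IsOuterKPlanar k G → G.chromaticNumber ≤ (Nat.sqrt (4 * k + 1) + 2 : ℕ)) ∧
    IsOuterKPlanar k (⊤ : SimpleGraph (Fin (Nat.sqrt (4 * k + 1) + 2))) := by
  constructor
  · intro V _ _ G hG
    obtain ⟨σ, hσ⟩ := hG
    classical
    set H : SimpleGraph (Fin (Fintype.card V)) := G.comap ⇑σ.symm with hH
    have hedge : ∀ f' : Sym2 (Fin (Fintype.card V)),
        f' ∈ H.edgeFinset ↔ (f'.map ⇑σ.symm) ∈ G.edgeFinset := by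
      intro f'
      induction f' using Sym2.ind with | _ x y =>
      rw [Sym2.map_pair_eq, SimpleGraph.mem_edgeFinset, SimpleGraph.mem_edgeFinset,
        SimpleGraph.mem_edgeSet, SimpleGraph.mem_edgeSet]
      exact Iff.rfl
    have hmapid : ∀ f' : Sym2 (Fin (Fintype.card V)), (f'.map ⇑σ.symm).map ⇑σ = f' := by
      intro f'
      rw [Sym2.map_map]
      have h1 : (⇑σ ∘ ⇑σ.symm) = id := by funext z; simp
      rw [h1, Sym2.map_id]
      rfl
    have HCH : ∀ e ∈ H.edgeFinset,
        (H.edgeFinset.filter (fun f => f ≠ e ∧ Sym2Cross e f)).card ≤ k := by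
      intro ε hε
      have heG : Sym2.map ⇑σ.symm ε ∈ G.edgeFinset := (hedge ε).mp hε
      have hle : (H.edgeFinset.filter (fun f => f ≠ ε ∧ Sym2Cross ε f)).card ≤
          (G.edgeFinset.filter (fun f => f ≠ Sym2.map ⇑σ.symm ε ∧
            Sym2Cross ((Sym2.map ⇑σ.symm ε).map ⇑σ) (f.map ⇑σ))).card := by
        apply Finset.card_le_card_of_injOn (fun f' => Sym2.map ⇑σ.symm f')
        · intro f' hf'
          simp only [Finset.mem_coe, Finset.mem_filter] at hf' ⊢
          refine ⟨(hedge f').mp hf'.1, ?_, ?_⟩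
          · intro hh
            apply hf'.2.1
            have h2 := congrArg (Sym2.map ⇑σ) hh
            rwa [hmapid, hmapid] at h2
          · rw [hmapid, hmapid]
            exact hf'.2.2
        · intro f1 _ f2 _ heq
          have h2 := congrArg (Sym2.map ⇑σ) heq
          rwa [hmapid, hmapid] at h2
      exact hle.trans (hσ _ heG)
    have hcol : H.Colorable (Nat.sqrt (4*k+1) + 2) :=
      OKP.colorable_of_cross k (Fintype.card V) H HCH
    have hcolG : G.Colorable (Nat.sqrt (4*k+1) + 2) := by
      refine SimpleGraph.Colorable.of_hom (SimpleGraph.Embedding.toHom ⟨σ.toEmbedding, ?_⟩) hcol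
      intro x y
      show G.Adj (σ.symm (σ x)) (σ.symm (σ y)) ↔ G.Adj x y
      rw [Equiv.symm_apply_apply, Equiv.symm_apply_apply]
    exact hcolG.chromaticNumber_le
  · refine ⟨finCongr (Fintype.card_fin (Nat.sqrt (4 * k + 1) + 2)).symm, ?_⟩
    intro e he
    have hmono : StrictMono
        (⇑(finCongr (Fintype.card_fin (Nat.sqrt (4 * k + 1) + 2)).symm)) := by
      intro x y hxy
      exact hxy
    obtain ⟨a, b, rfl⟩ :=
      Sym2.ind (f := fun e' : Sym2 (Fin (Nat.sqrt (4 * k + 1) + 2)) =>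
        ∃ a b, e' = s(a,b)) (fun x y => ⟨x, y, rfl⟩) e
    have hcr : ∀ f, Sym2Cross (Sym2.map
        (⇑(finCongr (Fintype.card_fin (Nat.sqrt (4 * k + 1) + 2)).symm)) s(a,b))
        (Sym2.map (⇑(finCongr (Fintype.card_fin (Nat.sqrt (4 * k + 1) + 2)).symm)) f) →
        Sym2Cross s(a,b) f := fun f h => (OKP.sym2cross_map hmono s(a,b) f).mp h
    rcases eq_or_ne a b with rfl | hne
    · apply le_trans _ (Nat.zero_le k)
      apply Nat.le_of_eq
      apply Finset.card_eq_zero.mpr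
      apply Finset.eq_empty_of_forall_notMem
      intro f hf
      rw [Finset.mem_filter] at hf
      obtain ⟨a', b', c, d, h1, h2, h3⟩ := hf.2.2
      rw [Sym2.map_pair_eq, Sym2.eq_iff] at h1
      have hab' : a' = b' := by
        rcases h1 with ⟨h1a, h1b⟩ | ⟨h1a, h1b⟩ <;> rw [← h1a, ← h1b]
      subst hab'
      rw [OKP.interleave_val] at h3
      omega
    rcases hne.lt_or_gt with h | h
    · apply OKP.top_count' rfl a b h
      intro f hf
      rw [Finset.mem_filter] at hf
      exact hcr f hf.2.2
    · apply OKP.top_count' rfl b a h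
      intro f hf
      rw [Finset.mem_filter] at hf
      have := hcr f hf.2.2
      obtain ⟨a', b', c, d, h1, h2, h3⟩ := this
      exact ⟨a', b', c, d, Sym2.eq_swap.trans h1, h2, h3⟩
end

section
/- Let G be a graph with an outer k-planar drawing on n vertices, and suppose some edge {a,b} has between n/3 and 2n/3 vertices strictly on one side. Then G has a balanced separator of size at most k + 2: removing {a,b}'s endpoints together with one endpoint of each edge crossing {a,b} disconnects the two sides, and each remaining part has at most 2n/3 vertices. -/
open Finset

open scoped Classical

/-- `G` has a balanced separation `(A,B)` of size at most `s`. -/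
def HasBalancedSepAtMost {V : Type*} [Fintype V] [DecidableEq V]
    (G : SimpleGraph V) (s : ℕ) : Prop :=
  ∃ A B : Finset V, A ∪ B = Finset.univ ∧
    (∀ u ∈ A \ B, ∀ v ∈ B \ A, ¬ G.Adj u v) ∧
    (A ∩ B).card ≤ s ∧
    3 * (A \ B).card ≤ 2 * Fintype.card V ∧ 3 * (B \ A).card ≤ 2 * Fintype.card V

/-- The separation number of `G` is at most `s`: every subgraph of `G`
(a subgraph `H ≤ G` restricted to a vertex subset `t`) has a balanced separation
of size at most `s`. -/
def SepNumAtMost {V : Type*} [Fintype V] [DecidableEq V]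
    (G : SimpleGraph V) (s : ℕ) : Prop :=
  ∀ (t : Finset V) (H : SimpleGraph V), H ≤ G →
    ∃ A B : Finset V, A ⊆ t ∧ B ⊆ t ∧ A ∪ B = t ∧
      (∀ u ∈ A \ B, ∀ v ∈ B \ A, ¬ H.Adj u v) ∧
      (A ∩ B).card ≤ s ∧
      3 * (A \ B).card ≤ 2 * t.card ∧ 3 * (B \ A).card ≤ 2 * t.card

set_option maxHeartbeats 1000000 in
/-- If in an outer `k`-planar drawing some edge `{a,b}` has between `n/3` and
`2n/3` vertices strictly on one side, then the graph has a balanced separation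
of size at most `k + 2`. -/
theorem stmt7 (n k : ℕ) (G : SimpleGraph (Fin n)) [DecidableRel G.Adj]
    (hk : ∀ e ∈ G.edgeFinset,
      (G.edgeFinset.filter (fun f => f ≠ e ∧ Sym2Cross e f)).card ≤ k)
    (a b : Fin n) (hab : a < b) (hadj : G.Adj a b) (l : ℕ)
    (hl : l = (Finset.univ.filter (fun c : Fin n => a < c ∧ c < b)).card)
    (hlo : n ≤ 3 * l) (hhi : 3 * l ≤ 2 * n) :
    HasBalancedSepAtMost G (k + 2) := by
  classical
  set M : Finset (Fin n) := Finset.univ.filter (fun c : Fin n => a < c ∧ c < b) with hM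
  set X : Finset (Sym2 (Fin n)) :=
    G.edgeFinset.filter (fun f => f ≠ s(a, b) ∧ Sym2Cross s(a, b) f) with hX
  set C : Finset (Fin n) := insert a (insert b (X.image (fun f => (Quot.out f).1))) with hC
  have hmemE : s(a, b) ∈ G.edgeFinset := by
    rw [SimpleGraph.mem_edgeFinset, SimpleGraph.mem_edgeSet]; exact hadj
  have hXk : X.card ≤ k := hk _ hmemE
  refine ⟨M ∪ C, Mᶜ ∪ C, ?_, ?_, ?_, ?_, ?_⟩
  · rw [Finset.union_union_union_comm, Finset.union_compl, Finset.union_self]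
    exact Finset.union_eq_left.mpr (Finset.subset_univ C)
  · rintro u hu v hv hadj'
    rw [Finset.mem_sdiff, Finset.mem_union, Finset.mem_union] at hu hv
    have huC : u ∉ C := fun h => hu.2 (Or.inr h)
    have hvC : v ∉ C := fun h => hv.2 (Or.inr h)
    have huM : u ∈ M := hu.1.resolve_right huC
    have hvMc : v ∈ Mᶜ := hv.1.resolve_right hvC
    have hvM : v ∉ M := Finset.mem_compl.mp hvMc
    rw [hM, Finset.mem_filter] at huM hvM
    have huM : a < u ∧ u < b := huM.2
    have hvM : ¬(a < v ∧ v < b) := fun h => hvM ⟨Finset.mem_univ v, h⟩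
    have hva : v ≠ a := by rintro rfl; exact hvC (by simp [hC])
    have hvb : v ≠ b := by rintro rfl; exact hvC (by simp [hC])
    -- v < a or b < v
    have hv' : v < a ∨ b < v := by
      by_contra h
      push_neg at h
      exact hvM ⟨lt_of_le_of_ne h.1 (Ne.symm hva), lt_of_le_of_ne (h.2) hvb⟩
    have hfE : s(u, v) ∈ G.edgeFinset := by
      rw [SimpleGraph.mem_edgeFinset, SimpleGraph.mem_edgeSet]; exact hadj'
    have hne : s(u, v) ≠ s(a, b) := by
      intro h
      rw [Sym2.eq_iff] at h
      rcases h with ⟨rfl, rfl⟩ | ⟨rfl, rfl⟩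
      · exact absurd huM.1 (lt_irrefl _)
      · exact absurd huM.2 (lt_irrefl _)
    have hcross : Sym2Cross s(a, b) s(u, v) := by
      refine ⟨a, b, u, v, rfl, rfl, ?_⟩
      unfold Interleave
      rcases hv' with h | h
      · right
        rw [min_eq_left hab.le, max_eq_right hab.le,
            min_eq_right (le_of_lt (h.trans huM.1)), max_eq_left (le_of_lt (h.trans huM.1))]
        exact ⟨h, huM.1, huM.2⟩
      · left
        rw [min_eq_left hab.le, max_eq_right hab.le,
            min_eq_left (le_of_lt (huM.2.trans h)), max_eq_right (le_of_lt (huM.2.trans h))]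
        exact ⟨huM.1, huM.2, h⟩
    have hfX : s(u, v) ∈ X := by
      rw [hX, Finset.mem_filter]; exact ⟨hfE, hne, hcross⟩
    have hout : (Quot.out (s(u, v) : Sym2 (Fin n))).1 ∈ C := by
      rw [hC]
      exact Finset.mem_insert_of_mem (Finset.mem_insert_of_mem
        (Finset.mem_image_of_mem _ hfX))
    have hmem : (Quot.out (s(u, v) : Sym2 (Fin n))).1 ∈ (s(u, v) : Sym2 (Fin n)) :=
      Sym2.out_fst_mem _
    rw [Sym2.mem_iff] at hmem
    rcases hmem with h | h
    · rw [h] at hout; exact huC hout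
    · rw [h] at hout; exact hvC hout
  · have hsub : (M ∪ C) ∩ (Mᶜ ∪ C) ⊆ C := by
      intro x hx
      rw [Finset.mem_inter, Finset.mem_union, Finset.mem_union] at hx
      rcases hx.1 with h1 | h1
      · rcases hx.2 with h2 | h2
        · exact absurd h1 (Finset.mem_compl.mp h2)
        · exact h2
      · exact h1
    calc ((M ∪ C) ∩ (Mᶜ ∪ C)).card ≤ C.card := Finset.card_le_card hsub
      _ ≤ (insert b (X.image (fun f => (Quot.out f).1))).card + 1 := by
          rw [hC]; exact Finset.card_insert_le _ _
      _ ≤ (X.image (fun f => (Quot.out f).1)).card + 1 + 1 := by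
          exact Nat.add_le_add_right (Finset.card_insert_le _ _) 1
      _ ≤ X.card + 1 + 1 := by
          exact Nat.add_le_add_right (Nat.add_le_add_right (Finset.card_image_le) 1) 1
      _ ≤ k + 2 := by omega
  · have hsub : (M ∪ C) \ (Mᶜ ∪ C) ⊆ M := by
      intro x hx
      rw [Finset.mem_sdiff, Finset.mem_union, Finset.mem_union] at hx
      exact hx.1.resolve_right (fun h => hx.2 (Or.inr h))
    have := Finset.card_le_card hsub
    rw [← hl] at this
    simp only [Fintype.card_fin]
    omega
  · have hsub : (Mᶜ ∪ C) \ (M ∪ C) ⊆ Mᶜ := by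
      intro x hx
      rw [Finset.mem_sdiff, Finset.mem_union, Finset.mem_union] at hx
      exact hx.1.resolve_right (fun h => hx.2 (Or.inr h))
    have h1 := Finset.card_le_card hsub
    have h2 : Mᶜ.card = n - l := by
      rw [Finset.card_compl, Fintype.card_fin, ← hl]
    have h3 : l ≤ n := by
      rw [hl]
      calc (Finset.univ.filter (fun c : Fin n => a < c ∧ c < b)).card
          ≤ (Finset.univ : Finset (Fin n)).card := Finset.card_le_card (Finset.filter_subset _ _)
        _ = n := by simp
    simp only [Fintype.card_fin]
    omega
end

section
/- Every graph admitting an outer k-planar drawing has a balanced separation of size at most 2k + 3; i.e., a separation (A,B) with |A∩B| ≤ 2k+3, |A∖B| ≤ 2n/3, and |B∖A| ≤ 2n/3. -/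
open Finset

open scoped Classical

/-! ### Auxiliary material for the proof -/

/-- Interleaving of linearly ordered endpoint quadruples, stated over `ℕ`. -/
def Itl (a b c d : ℕ) : Prop :=
  (a < c ∧ c < b ∧ b < d) ∨ (c < a ∧ a < d ∧ d < b)

lemma interleave_of_itl {n : ℕ} {a b c d : Fin n} (hab : a < b) (hcd : c < d)
    (h : Itl a.val b.val c.val d.val) : Interleave a b c d := by
  unfold Interleave
  rw [min_eq_left hab.le, max_eq_right hab.le, min_eq_left hcd.le, max_eq_right hcd.le]
  rcases h with ⟨h1, h2, h3⟩ | ⟨h1, h2, h3⟩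
  · exact Or.inl ⟨Fin.lt_def.mpr h1, Fin.lt_def.mpr h2, Fin.lt_def.mpr h3⟩
  · exact Or.inr ⟨Fin.lt_def.mpr h1, Fin.lt_def.mpr h2, Fin.lt_def.mpr h3⟩

lemma card_filter_interval {V : Type*} [Fintype V] [DecidableEq V]
    (σ : V ≃ Fin (Fintype.card V)) (lo hi : ℕ) (hhi : hi ≤ Fintype.card V) :
    ((univ : Finset V).filter (fun w => lo ≤ (σ w : ℕ) ∧ (σ w : ℕ) < hi)).card = hi - lo := by
  have himg : ((univ : Finset V).filter (fun w => lo ≤ (σ w : ℕ) ∧ (σ w : ℕ) < hi)).image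
      (fun w => (σ w : ℕ)) = Finset.Ico lo hi := by
    ext m
    simp only [Finset.mem_image, Finset.mem_filter, Finset.mem_univ, true_and, Finset.mem_Ico]
    constructor
    · rintro ⟨w, ⟨h1, h2⟩, rfl⟩; exact ⟨h1, h2⟩
    · rintro ⟨h1, h2⟩
      refine ⟨σ.symm ⟨m, lt_of_lt_of_le h2 hhi⟩, by simp [h1, h2], by simp⟩
  have hinj : Set.InjOn (fun w => (σ w : ℕ))
      ↑((univ : Finset V).filter (fun w => lo ≤ (σ w : ℕ) ∧ (σ w : ℕ) < hi)) := by
    intro x _ y _ hxy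
    exact σ.injective (Fin.val_injective hxy)
  rw [← Finset.card_image_of_injOn hinj, himg, Nat.card_Ico]

lemma assemble {V : Type*} [Fintype V] [DecidableEq V] (G : SimpleGraph V) (s : ℕ)
    (σ : V ≃ Fin (Fintype.card V)) (lo hi : ℕ) (S : Finset V)
    (hhi : hi ≤ Fintype.card V)
    (hw1 : Fintype.card V ≤ 3 * (hi - lo)) (hw2 : 3 * (hi - lo) ≤ 2 * Fintype.card V)
    (hS : S.card ≤ s)
    (hcov : ∀ u v, G.Adj u v → u ∉ S → v ∉ S →
      ((lo ≤ (σ u : ℕ) ∧ (σ u : ℕ) < hi) ↔ (lo ≤ (σ v : ℕ) ∧ (σ v : ℕ) < hi))) :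
    HasBalancedSepAtMost G s := by
  classical
  let P : V → Prop := fun w => lo ≤ (σ w : ℕ) ∧ (σ w : ℕ) < hi
  refine ⟨(univ.filter (fun w => P w)) ∪ S, (univ.filter (fun w => ¬ P w)) ∪ S, ?_, ?_, ?_, ?_, ?_⟩
  · ext v
    simp only [Finset.mem_union, Finset.mem_filter, Finset.mem_univ, true_and, iff_true]
    tauto
  · intro u hu v hv hadj
    simp only [Finset.mem_sdiff, Finset.mem_union, Finset.mem_filter, Finset.mem_univ,
      true_and, not_or] at hu hv
    have hus : u ∉ S := hu.2.2
    have hvs : v ∉ S := hv.2.2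
    have h1 : P u := by rcases hu.1 with h | h; exact h; exact absurd h hus
    have h2 : ¬ P v := by rcases hv.1 with h | h; exact h; exact absurd h hvs
    exact h2 ((hcov u v hadj hus hvs).mp h1)
  · have : (univ.filter (fun w => P w) ∪ S) ∩ (univ.filter (fun w => ¬ P w) ∪ S) = S := by
      ext v
      simp only [Finset.mem_inter, Finset.mem_union, Finset.mem_filter, Finset.mem_univ, true_and]
      tauto
    rw [this]; exact hS
  · have hsub : (univ.filter (fun w => P w) ∪ S) \ (univ.filter (fun w => ¬ P w) ∪ S)
        ⊆ univ.filter (fun w => P w) := by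
      intro w hw
      simp only [Finset.mem_sdiff, Finset.mem_union, Finset.mem_filter, Finset.mem_univ,
        true_and, not_or] at hw
      simp only [Finset.mem_filter, Finset.mem_univ, true_and]
      rcases hw.1 with h | h; exact h; exact absurd h hw.2.2
    have := Finset.card_le_card hsub
    rw [card_filter_interval σ lo hi hhi] at this
    omega
  · have hsub : (univ.filter (fun w => ¬ P w) ∪ S) \ (univ.filter (fun w => P w) ∪ S)
        ⊆ univ.filter (fun w => ¬ P w) := by
      intro w hw
      simp only [Finset.mem_sdiff, Finset.mem_union, Finset.mem_filter, Finset.mem_univ,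
        true_and, not_or] at hw
      simp only [Finset.mem_filter, Finset.mem_univ, true_and]
      rcases hw.1 with h | h; exact h; exact absurd h hw.2.2
    have h1 := Finset.card_le_card hsub
    have h2 : (univ.filter (fun w => ¬ P w)).card + (univ.filter (fun w => P w)).card
        = Fintype.card V := by
      rw [add_comm]
      rw [Finset.card_filter_add_card_filter_not (p := fun w => P w)]
      simp
    rw [card_filter_interval σ lo hi hhi] at h2
    omega

lemma crs_exists {V : Type*} [Fintype V] [DecidableEq V] {k : ℕ} {G : SimpleGraph V}
    (σ : V ≃ Fin (Fintype.card V))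
    (hσ : ∀ e ∈ G.edgeFinset,
      (G.edgeFinset.filter (fun f => f ≠ e ∧ Sym2Cross (e.map σ) (f.map σ))).card ≤ k)
    {u v : V} (huv : G.Adj u v) (hlt : (σ u : ℕ) < (σ v : ℕ)) :
    ∃ S : Finset V, S.card ≤ k ∧ ∀ x y, G.Adj x y → (σ x : ℕ) < (σ y : ℕ) →
      (x, y) ≠ (u, v) → Itl (σ u : ℕ) (σ v : ℕ) (σ x : ℕ) (σ y : ℕ) → x ∈ S := by
  classical
  set CR : Finset (V × V) := (univ : Finset (V × V)).filter
    (fun q => G.Adj q.1 q.2 ∧ (σ q.1 : ℕ) < (σ q.2 : ℕ) ∧ (q.1, q.2) ≠ (u, v) ∧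
      Itl (σ u : ℕ) (σ v : ℕ) (σ q.1 : ℕ) (σ q.2 : ℕ)) with hCR
  have hkey : ∀ {x y : V}, G.Adj x y → (σ x : ℕ) < (σ y : ℕ) → ∀ {x' y' : V},
      G.Adj x' y' → (σ x' : ℕ) < (σ y' : ℕ) → s(x, y) = s(x', y') → (x, y) = (x', y') := by
    intro x y _ h1 x' y' _ h2 heq
    rcases Sym2.eq_iff.mp heq with ⟨rfl, rfl⟩ | ⟨rfl, rfl⟩
    · rfl
    · omega
  have hcard : CR.card ≤ k := by
    have hmem : s(u, v) ∈ G.edgeFinset := by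
      rw [SimpleGraph.mem_edgeFinset, SimpleGraph.mem_edgeSet]; exact huv
    refine le_trans ?_ (hσ s(u, v) hmem)
    apply Finset.card_le_card_of_injOn (fun q => s(q.1, q.2))
    · intro q hq
      simp only [hCR, Finset.mem_coe, Finset.mem_filter, Finset.mem_univ, true_and] at hq
      obtain ⟨hadj, hqlt, hne, hitl⟩ := hq
      simp only [Finset.mem_coe, Finset.mem_filter, SimpleGraph.mem_edgeFinset, SimpleGraph.mem_edgeSet]
      refine ⟨hadj, ?_, ?_⟩
      · intro heq
        exact hne (hkey hadj hqlt huv hlt heq)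
      · rw [Sym2.map_pair_eq, Sym2.map_pair_eq]
        exact ⟨σ u, σ v, σ q.1, σ q.2, rfl, rfl,
          interleave_of_itl (Fin.lt_def.mpr hlt) (Fin.lt_def.mpr hqlt) hitl⟩
    · intro q hq q' hq' heq
      simp only [hCR, Finset.coe_filter, Set.mem_setOf_eq, Finset.mem_univ, true_and] at hq hq'
      have := hkey hq.1 hq.2.1 hq'.1 hq'.2.1 heq
      exact Prod.ext (congrArg Prod.fst this) (congrArg Prod.snd this)
  refine ⟨CR.image Prod.fst, le_trans Finset.card_image_le hcard, ?_⟩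
  intro x y hadj hxy hne hitl
  have : (x, y) ∈ CR := by
    simp only [hCR, Finset.mem_filter, Finset.mem_univ, true_and]
    exact ⟨hadj, hxy, hne, hitl⟩
  exact Finset.mem_image_of_mem Prod.fst this

lemma climb {V : Type*} [Fintype V] [DecidableEq V] {k : ℕ} {G : SimpleGraph V}
    (σ : V ≃ Fin (Fintype.card V))
    (hσ : ∀ e ∈ G.edgeFinset,
      (G.edgeFinset.filter (fun f => f ≠ e ∧ Sym2Cross (e.map σ) (f.map σ))).card ≤ k)
    (c : ℕ) (hc : c ≤ Fintype.card V) :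
    ∃ (g2 : ℕ) (S2 : Finset V), c ≤ g2 ∧ g2 ≤ Fintype.card V ∧
      (g2 = c ∨ 3 * g2 + 3 * k + 4 ≤ 3 * c + Fintype.card V) ∧
      S2.card ≤ k + 1 ∧
      (∀ x y, G.Adj x y → (σ x : ℕ) < (σ y : ℕ) →
        3 * ((σ y : ℕ) - (σ x : ℕ)) + 3 * (k + 1) < Fintype.card V →
        (σ x : ℕ) < g2 → g2 ≤ (σ y : ℕ) → x ∈ S2) := by
  classical
  set D : Finset (V × V) := (univ : Finset (V × V)).filter
    (fun q => G.Adj q.1 q.2 ∧ (σ q.1 : ℕ) < (σ q.2 : ℕ) ∧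
      3 * ((σ q.2 : ℕ) - (σ q.1 : ℕ)) + 3 * (k + 1) < Fintype.card V ∧
      (σ q.1 : ℕ) < c ∧ c ≤ (σ q.2 : ℕ)) with hD
  rcases eq_or_ne D ∅ with hDe | hDne
  · refine ⟨c, ∅, le_rfl, hc, Or.inl rfl, by simp, ?_⟩
    intro x y hadj hlt hshort hx hy
    exfalso
    have : (x, y) ∈ D := by
      simp only [hD, Finset.mem_filter, Finset.mem_univ, true_and]
      exact ⟨hadj, hlt, hshort, hx, hy⟩
    rw [hDe] at this
    exact absurd this (Finset.notMem_empty _)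
  · obtain ⟨F, hF, hmax⟩ := Finset.exists_max_image D
      (fun q => (σ q.2 : ℕ) - (σ q.1 : ℕ)) (Finset.nonempty_of_ne_empty hDne)
    simp only [hD, Finset.mem_filter, Finset.mem_univ, true_and] at hF
    obtain ⟨hFadj, hFlt, hFshort, hFx, hFy⟩ := hF
    set x0 := (σ F.1 : ℕ) with hx0
    set y0 := (σ F.2 : ℕ) with hy0
    obtain ⟨S1, hS1card, hS1cov⟩ := crs_exists (k := k) σ hσ hFadj hFlt
    refine ⟨y0 + 1, insert F.2 S1, by omega, ?_, ?_, ?_, ?_⟩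
    · have := (σ F.2).isLt; omega
    · right; omega
    · calc (insert F.2 S1).card ≤ S1.card + 1 := Finset.card_insert_le _ _
        _ ≤ k + 1 := by omega
    · intro x y hadj hlt hshort hx hy
      by_cases hxy0 : (σ x : ℕ) = y0
      · have : σ x = σ F.2 := Fin.val_injective hxy0
        have : x = F.2 := σ.injective this
        rw [this]; exact Finset.mem_insert_self _ _
      · by_cases hxx0 : (σ x : ℕ) ≤ x0
        · exfalso
          have hmem : (x, y) ∈ D := by
            simp only [hD, Finset.mem_filter, Finset.mem_univ, true_and]
            exact ⟨hadj, hlt, hshort, by omega, by omega⟩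
          have := hmax (x, y) hmem
          simp only at this
          omega
        · have hne : (x, y) ≠ (F.1, F.2) := by
            intro heq
            have : x = F.1 := congrArg Prod.fst heq
            rw [this] at hxx0
            omega
          have hitl : Itl x0 y0 (σ x : ℕ) (σ y : ℕ) := by
            left; omega
          have := hS1cov x y hadj hlt (by simpa using hne) hitl
          exact Finset.mem_insert_of_mem this

lemma master {V : Type*} [Fintype V] [DecidableEq V] {k : ℕ} {G : SimpleGraph V}
    (σ : V ≃ Fin (Fintype.card V))
    (hσ : ∀ e ∈ G.edgeFinset,
      (G.edgeFinset.filter (fun f => f ≠ e ∧ Sym2Cross (e.map σ) (f.map σ))).card ≤ k)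
    (hn : 2 * k + 4 ≤ Fintype.card V) :
    ∃ (lo hi : ℕ) (S : Finset V), hi ≤ Fintype.card V ∧
      Fintype.card V ≤ 3 * (hi - lo) ∧ 3 * (hi - lo) ≤ 2 * Fintype.card V ∧
      S.card ≤ 2 * k + 3 ∧
      (∀ u v, G.Adj u v → (σ u : ℕ) < (σ v : ℕ) → u ∉ S → v ∉ S →
        ((lo ≤ (σ u : ℕ) ∧ (σ u : ℕ) < hi) ↔ (lo ≤ (σ v : ℕ) ∧ (σ v : ℕ) < hi))) := by
  classical
  by_cases hsm : Fintype.card V ≤ 6 * k + 9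
  · -- trivial case: one third of the vertices fits in the separator
    refine ⟨0, (Fintype.card V + 2) / 3,
      univ.filter (fun w => 0 ≤ (σ w : ℕ) ∧ (σ w : ℕ) < (Fintype.card V + 2) / 3),
      by omega, by omega, by omega, ?_, ?_⟩
    · rw [card_filter_interval σ 0 ((Fintype.card V + 2) / 3) (by omega)]
      omega
    · intro u v _ _ hu hv
      simp only [Finset.mem_filter, Finset.mem_univ, true_and, not_and, not_lt] at hu hv
      omega
  · have hbig : 6 * k + 10 ≤ Fintype.card V := by omega
    by_cases hM : ∃ q : V × V, G.Adj q.1 q.2 ∧ (σ q.1 : ℕ) < (σ q.2 : ℕ) ∧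
        Fintype.card V ≤ 3 * ((σ q.2 : ℕ) - (σ q.1 : ℕ)) + 3 * (k + 1) ∧
        3 * ((σ q.2 : ℕ) - (σ q.1 : ℕ)) ≤ 2 * Fintype.card V + 3 * (k + 1)
    · -- medium edge case
      obtain ⟨⟨u, v⟩, hadj, hlt, hm1, hm2⟩ := hM
      simp only at hadj hlt hm1 hm2
      obtain ⟨S1, hS1card, hS1cov⟩ := crs_exists σ hσ hadj hlt
      have hbn : (σ v : ℕ) < Fintype.card V := (σ v).isLt
      have main : ∀ lo hi exl exr : ℕ, hi ≤ Fintype.card V →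
          Fintype.card V ≤ 3 * (hi - lo) → 3 * (hi - lo) ≤ 2 * Fintype.card V →
          exr ≤ Fintype.card V → exr - exl + k + 2 ≤ 2 * k + 3 →
          (∀ pu pv : ℕ, pu < pv → pu ≠ (σ u : ℕ) → pu ≠ (σ v : ℕ) →
            pv ≠ (σ u : ℕ) → pv ≠ (σ v : ℕ) →
            ¬(exl ≤ pu ∧ pu < exr) → ¬(exl ≤ pv ∧ pv < exr) →
            ¬((lo ≤ pu ∧ pu < hi) ↔ (lo ≤ pv ∧ pv < hi)) →
            Itl (σ u : ℕ) (σ v : ℕ) pu pv) →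
          ∃ (lo hi : ℕ) (S : Finset V), hi ≤ Fintype.card V ∧
            Fintype.card V ≤ 3 * (hi - lo) ∧ 3 * (hi - lo) ≤ 2 * Fintype.card V ∧
            S.card ≤ 2 * k + 3 ∧
            (∀ u' v', G.Adj u' v' → (σ u' : ℕ) < (σ v' : ℕ) → u' ∉ S → v' ∉ S →
              ((lo ≤ (σ u' : ℕ) ∧ (σ u' : ℕ) < hi) ↔ (lo ≤ (σ v' : ℕ) ∧ (σ v' : ℕ) < hi))) := by
        intro lo hi exl exr h1 h2 h3 h4 h5 hcore
        set EX : Finset V := univ.filter (fun w => exl ≤ (σ w : ℕ) ∧ (σ w : ℕ) < exr) with hEX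
        refine ⟨lo, hi, insert u (insert v (S1 ∪ EX)), h1, h2, h3, ?_, ?_⟩
        · have e1 := Finset.card_insert_le u (insert v (S1 ∪ EX))
          have e2 := Finset.card_insert_le v (S1 ∪ EX)
          have e3 := Finset.card_union_le S1 EX
          have e4 : EX.card = exr - exl := card_filter_interval σ exl exr h4
          omega
        · intro u' v' hadj' hlt' hu' hv'
          simp only [Finset.mem_insert, Finset.mem_union, hEX, Finset.mem_filter,
            Finset.mem_univ, true_and, not_or] at hu' hv'
          obtain ⟨hne1, hne2, hns1, hnex⟩ := hu'
          obtain ⟨hne1', hne2', hns1', hnex'⟩ := hv'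
          by_contra hiff
          have hva : (σ u' : ℕ) ≠ (σ u : ℕ) := fun hh => hne1 (σ.injective (Fin.val_injective hh))
          have hvb : (σ u' : ℕ) ≠ (σ v : ℕ) := fun hh => hne2 (σ.injective (Fin.val_injective hh))
          have hva' : (σ v' : ℕ) ≠ (σ u : ℕ) := fun hh => hne1' (σ.injective (Fin.val_injective hh))
          have hvb' : (σ v' : ℕ) ≠ (σ v : ℕ) := fun hh => hne2' (σ.injective (Fin.val_injective hh))
          have hitl := hcore (σ u' : ℕ) (σ v' : ℕ) hlt' hva hvb hva' hvb' hnex hnex' hiff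
          have hpairne : (u', v') ≠ (u, v) := by
            intro heq; exact hne1 (congrArg Prod.fst heq)
          exact hns1 (hS1cov u' v' hadj' hlt' hpairne hitl)
      by_cases hw : Fintype.card V ≤ 3 * ((σ v : ℕ) - (σ u : ℕ)) ∧
          3 * ((σ v : ℕ) - (σ u : ℕ)) ≤ 2 * Fintype.card V
      · -- balanced edge
        refine main (σ u : ℕ) (σ v : ℕ) 0 0 (by omega) (by omega) (by omega) (by omega)
          (by omega) ?_
        intro pu pv h1 h2 h3 h4 h5 h6 h7 h8
        unfold Itl
        omega
      · by_cases hbig2 : 2 * Fintype.card V < 3 * ((σ v : ℕ) - (σ u : ℕ))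
        · -- too long: truncate to the right
          refine main (σ u : ℕ) ((σ u : ℕ) + 2 * Fintype.card V / 3)
            ((σ u : ℕ) + 2 * Fintype.card V / 3) (σ v : ℕ)
            (by omega) (by omega) (by omega) (by omega) (by omega) ?_
          intro pu pv h1 h2 h3 h4 h5 h6 h7 h8
          unfold Itl
          omega
        · -- too short
          by_cases hfit : (σ u : ℕ) + (Fintype.card V + 2) / 3 ≤ Fintype.card V
          · -- extend to the right
            refine main (σ u : ℕ) ((σ u : ℕ) + (Fintype.card V + 2) / 3)
              ((σ v : ℕ) + 1) ((σ u : ℕ) + (Fintype.card V + 2) / 3)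
              (by omega) (by omega) (by omega) (by omega) (by omega) ?_
            intro pu pv h1 h2 h3 h4 h5 h6 h7 h8
            unfold Itl
            omega
          · -- extend to the left
            refine main ((σ v : ℕ) + 1 - (Fintype.card V + 2) / 3) ((σ v : ℕ) + 1)
              ((σ v : ℕ) + 1 - (Fintype.card V + 2) / 3) (σ u : ℕ)
              (by omega) (by omega) (by omega) (by omega) (by omega) ?_
            intro pu pv h1 h2 h3 h4 h5 h6 h7 h8
            unfold Itl
            omega
    · -- no medium edge: dichotomy
      have notM : ∀ x y, G.Adj x y → (σ x : ℕ) < (σ y : ℕ) →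
          (3 * ((σ y : ℕ) - (σ x : ℕ)) + 3 * (k + 1) < Fintype.card V ∨
           2 * Fintype.card V + 3 * (k + 1) < 3 * ((σ y : ℕ) - (σ x : ℕ))) := by
        intro x y h1 h2
        by_contra hcon
        push_neg at hcon
        exact hM ⟨(x, y), h1, h2,
          show Fintype.card V ≤ 3 * ((σ y : ℕ) - (σ x : ℕ)) + 3 * (k + 1) by omega,
          show 3 * ((σ y : ℕ) - (σ x : ℕ)) ≤ 2 * Fintype.card V + 3 * (k + 1) by omega⟩
      by_cases hL : ∃ q : V × V, G.Adj q.1 q.2 ∧ (σ q.1 : ℕ) < (σ q.2 : ℕ) ∧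
          2 * Fintype.card V + 3 * (k + 1) < 3 * ((σ q.2 : ℕ) - (σ q.1 : ℕ))
      · -- long edges exist
        set ESL : Finset (V × V) := (univ : Finset (V × V)).filter
          (fun q => G.Adj q.1 q.2 ∧ (σ q.1 : ℕ) < (σ q.2 : ℕ) ∧
            2 * Fintype.card V + 3 * (k + 1) < 3 * ((σ q.2 : ℕ) - (σ q.1 : ℕ))) with hESL
        have hne : ESL.Nonempty := by
          obtain ⟨q, hq1, hq2, hq3⟩ := hL
          refine ⟨q, ?_⟩
          simp only [hESL, Finset.mem_filter, Finset.mem_univ, true_and]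
          exact ⟨hq1, hq2, hq3⟩
        obtain ⟨E, hE, hmin⟩ := Finset.exists_min_image ESL
          (fun q => (σ q.2 : ℕ) - (σ q.1 : ℕ)) hne
        simp only [hESL, Finset.mem_filter, Finset.mem_univ, true_and] at hE
        obtain ⟨hEadj, hElt, hElong⟩ := hE
        obtain ⟨S1, hS1card, hS1cov⟩ := crs_exists σ hσ hEadj hElt
        have hbn : (σ E.2 : ℕ) < Fintype.card V := (σ E.2).isLt
        have hc : (σ E.1 : ℕ) + 1 + (Fintype.card V + 2) / 3 ≤ Fintype.card V := by omega
        obtain ⟨g2, S2, hcg2, hg2n, hg2alt, hS2card, hS2cov⟩ :=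
          climb σ hσ ((σ E.1 : ℕ) + 1 + (Fintype.card V + 2) / 3) hc
        have hg2b : g2 ≤ (σ E.2 : ℕ) := by omega
        refine ⟨(σ E.1 : ℕ) + 1, g2, insert E.1 (S1 ∪ S2), hg2n, by omega, by omega, ?_, ?_⟩
        · have e1 := Finset.card_insert_le E.1 (S1 ∪ S2)
          have e2 := Finset.card_union_le S1 S2
          omega
        · intro u' v' hadj' hlt' hu' hv'
          simp only [Finset.mem_insert, Finset.mem_union, not_or] at hu' hv'
          obtain ⟨hne1, hns1, hns2⟩ := hu'
          obtain ⟨hne1', hns1', hns2'⟩ := hv'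
          by_contra hiff
          have hva : (σ u' : ℕ) ≠ (σ E.1 : ℕ) := fun hh => hne1 (σ.injective (Fin.val_injective hh))
          by_cases hcase : (σ E.1 : ℕ) + 1 ≤ (σ u' : ℕ) ∧ (σ u' : ℕ) < g2
          · have hvout : ¬((σ E.1 : ℕ) + 1 ≤ (σ v' : ℕ) ∧ (σ v' : ℕ) < g2) := by
              intro hh; exact hiff (iff_of_true hcase hh)
            have hpv : g2 ≤ (σ v' : ℕ) := by omega
            rcases notM u' v' hadj' hlt' with hsh | hlg
            · exact hns2 (hS2cov u' v' hadj' hlt' hsh (by omega) hpv)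
            · by_cases hgt : (σ E.2 : ℕ) < (σ v' : ℕ)
              · have hitl : Itl (σ E.1 : ℕ) (σ E.2 : ℕ) (σ u' : ℕ) (σ v' : ℕ) := by
                  unfold Itl; omega
                have hpairne : (u', v') ≠ (E.1, E.2) := by
                  intro heq; exact hne1 (congrArg Prod.fst heq)
                exact hns1 (hS1cov u' v' hadj' hlt' hpairne hitl)
              · have hmem : (u', v') ∈ ESL := by
                  simp only [hESL, Finset.mem_filter, Finset.mem_univ, true_and]
                  exact ⟨hadj', hlt', hlg⟩
                have := hmin (u', v') hmem
                simp only at this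
                omega
          · have hvin : (σ E.1 : ℕ) + 1 ≤ (σ v' : ℕ) ∧ (σ v' : ℕ) < g2 := by
              by_contra hvout
              exact hiff (iff_of_false hcase hvout)
            have hitl : Itl (σ E.1 : ℕ) (σ E.2 : ℕ) (σ u' : ℕ) (σ v' : ℕ) := by
              unfold Itl; omega
            have hpairne : (u', v') ≠ (E.1, E.2) := by
              intro heq; exact hne1 (congrArg Prod.fst heq)
            exact hns1 (hS1cov u' v' hadj' hlt' hpairne hitl)
      · -- all edges are short
        have hallshort : ∀ x y, G.Adj x y → (σ x : ℕ) < (σ y : ℕ) →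
            3 * ((σ y : ℕ) - (σ x : ℕ)) + 3 * (k + 1) < Fintype.card V := by
          intro x y h1 h2
          rcases notM x y h1 h2 with h | h
          · exact h
          · exact absurd ⟨(x, y), h1, h2,
              show 2 * Fintype.card V + 3 * (k + 1) < 3 * ((σ y : ℕ) - (σ x : ℕ)) from h⟩ hL
        have hc : (Fintype.card V + 2) / 3 ≤ Fintype.card V := by omega
        obtain ⟨g2, S2, hcg2, hg2n, hg2alt, hS2card, hS2cov⟩ :=
          climb σ hσ ((Fintype.card V + 2) / 3) hc
        refine ⟨0, g2, S2, hg2n, by omega, by omega, by omega, ?_⟩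
        intro u' v' hadj' hlt' hu' hv'
        by_contra hiff
        by_cases hcase : 0 ≤ (σ u' : ℕ) ∧ (σ u' : ℕ) < g2
        · have hvout : ¬(0 ≤ (σ v' : ℕ) ∧ (σ v' : ℕ) < g2) := by
            intro hh; exact hiff (iff_of_true hcase hh)
          have hpv : g2 ≤ (σ v' : ℕ) := by omega
          exact hu' (hS2cov u' v' hadj' hlt' (hallshort u' v' hadj' hlt') (by omega) hpv)
        · have hvin : 0 ≤ (σ v' : ℕ) ∧ (σ v' : ℕ) < g2 := by
            by_contra hvout
            exact hiff (iff_of_false hcase hvout)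
          omega

/-- Every graph admitting an outer `k`-planar drawing has a balanced separation
of size at most `2k + 3`. -/
theorem stmt8 (k : ℕ) {V : Type*} [Fintype V] [DecidableEq V]
    (G : SimpleGraph V) (h : IsOuterKPlanar k G) :
    HasBalancedSepAtMost G (2 * k + 3) := by
  classical
  obtain ⟨σ, hσ⟩ := h
  by_cases hsmall : Fintype.card V ≤ 2 * k + 3
  · refine ⟨univ, univ, by simp, ?_, ?_, ?_, ?_⟩
    · intro u hu
      simp at hu
    · simpa [Finset.card_univ] using hsmall
    · simp
    · simp
  · obtain ⟨lo, hi, S, h1, h2, h3, h4, h5⟩ := master σ hσ (by omega)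
    apply assemble G (2 * k + 3) σ lo hi S h1 h2 h3 h4
    intro u v hadj hu hv
    rcases lt_trichotomy ((σ u : ℕ)) ((σ v : ℕ)) with hlt | heq | hgt
    · exact h5 u v hadj hlt hu hv
    · exact absurd (σ.injective (Fin.val_injective heq)) hadj.ne
    · exact (h5 v u hadj.symm hgt hv hu).symm
end
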